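/- arXiv:1411.5505 — 5 statements merged into one kernel-verified Lean document; each statement's English description precedes it below -/
import Mathlib

section
/- Let q > 2, λ > 0, and let f : [0,∞) → ℝ be a twice continuously differentiable solution of the ODE f''(ξ) + λ|f'(ξ)|^q − (1/2)ξ f'(ξ) + ((q−2)/(2(q−1))) f(ξ) = 0 on [0,∞) with initial data f(0) = −1 and f'(0) = 0. Then lim_{ξ→∞} f(ξ)/ξ^{q/(q−1)} = C, where C = [ (1/(λ(q−1))) · ((q−1)/q)^q ]^{1/(q−1)}. -/
open Set Filter Topology Real

/-- `f` is a twice continuously differentiable solution, on the set `s`, of the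
self-similar profile ODE `f'' + λ|f'|^q - (1/2)ξ f' + ((q-2)/(2(q-1))) f = 0`
associated with the generalized deterministic KPZ equation. -/
def SolvesKPZProfile (q lam : ℝ) (s : Set ℝ) (f : ℝ → ℝ) : Prop :=
  ContDiffOn ℝ 2 f s ∧
  ∀ ξ ∈ s,
    derivWithin (derivWithin f s) s ξ + lam * |derivWithin f s ξ| ^ q
      - (1 / 2) * ξ * derivWithin f s ξ + ((q - 2) / (2 * (q - 1))) * f ξ = 0


/-- Tangent line inequality for `t ↦ t^r` (convexity), real exponent `r ≥ 1`. -/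
lemma kpz_tangent {s t r : ℝ} (hs : 0 < s) (ht : 0 ≤ t) (hr : 1 ≤ r) :
    s ^ r + r * s ^ (r - 1) * (t - s) ≤ t ^ r := by
  have hb := one_add_mul_self_le_rpow_one_add (s := t / s - 1) (by
    have : 0 ≤ t / s := div_nonneg ht hs.le
    linarith) hr
  have h1 : (1 + (t / s - 1)) = t / s := by ring
  rw [h1] at hb
  have h2 : (t / s) ^ r = t ^ r / s ^ r := Real.div_rpow ht hs.le r
  have hsr : (0:ℝ) < s ^ r := Real.rpow_pos_of_pos hs r
  have hb2 : (1 + r * (t / s - 1)) * s ^ r ≤ t ^ r := by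
    rw [h2] at hb
    calc (1 + r * (t / s - 1)) * s ^ r ≤ t ^ r / s ^ r * s ^ r :=
          mul_le_mul_of_nonneg_right hb hsr.le
      _ = t ^ r := by field_simp
  have h3 : s ^ (r - 1) = s ^ r / s := by
    rw [Real.rpow_sub hs, Real.rpow_one]
  calc s ^ r + r * s ^ (r - 1) * (t - s)
      = (1 + r * (t / s - 1)) * s ^ r := by
        rw [h3]; field_simp
    _ ≤ t ^ r := hb2

/-- If `u ≥ K` initially and `u' > 0` whenever `u = K`, then `u ≥ K` forever. -/
lemma kpz_stay_above {u u' : ℝ → ℝ} {a K : ℝ}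
    (hu : ∀ ξ ∈ Ici a, HasDerivAt u (u' ξ) ξ)
    (hua : K ≤ u a)
    (hder : ∀ ξ ∈ Ici a, u ξ = K → 0 < u' ξ) :
    ∀ ξ ∈ Ici a, K ≤ u ξ := by
  by_contra h
  push_neg at h
  obtain ⟨b, hb, hub⟩ := h
  have hcont : ContinuousOn u (Icc a b) := fun ξ hξ =>
    ((hu ξ hξ.1).continuousAt).continuousWithinAt
  have hSclosed : IsClosed (Icc a b ∩ u ⁻¹' (Ici K)) :=
    hcont.preimage_isClosed_of_isClosed isClosed_Icc isClosed_Ici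
  have hab : a ≤ b := hb
  have haS : a ∈ Icc a b ∩ u ⁻¹' (Ici K) := ⟨⟨le_rfl, hab⟩, hua⟩
  have hSne : (Icc a b ∩ u ⁻¹' (Ici K)).Nonempty := ⟨a, haS⟩
  have hSbdd : BddAbove (Icc a b ∩ u ⁻¹' (Ici K)) := ⟨b, fun x hx => hx.1.2⟩
  set T := sSup (Icc a b ∩ u ⁻¹' (Ici K)) with hT
  have hTS : T ∈ Icc a b ∩ u ⁻¹' (Ici K) := hSclosed.csSup_mem hSne hSbdd
  have hTa : a ≤ T := hTS.1.1
  have hTb : T < b := lt_of_le_of_ne hTS.1.2 (fun h => by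
    rw [h] at hTS; exact absurd hTS.2 (not_le.mpr hub))
  have hright : ∀ ζ, T < ζ → ζ ≤ b → u ζ < K := by
    intro ζ h1 h2
    by_contra h3
    push_neg at h3
    exact absurd (le_csSup hSbdd ⟨⟨hTa.trans h1.le, h2⟩, h3⟩) (not_le.mpr h1)
  have huT : u T = K := by
    refine le_antisymm ?_ hTS.2
    have hten : Tendsto u (𝓝[Ioc T b] T) (𝓝 (u T)) :=
      ((hu T (hTa : T ∈ Ici a)).continuousAt).continuousWithinAt
    have hne : (𝓝[Ioc T b] T).NeBot := left_nhdsWithin_Ioc_neBot hTb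
    exact le_of_tendsto hten (eventually_nhdsWithin_of_forall
      (fun ζ hζ => (hright ζ hζ.1 hζ.2).le))
  have hslope : Tendsto (slope u T) (𝓝[≠] T) (𝓝 (u' T)) :=
    hasDerivAt_iff_tendsto_slope.mp (hu T hTa)
  have hslope2 : Tendsto (slope u T) (𝓝[>] T) (𝓝 (u' T)) :=
    hslope.mono_left (nhdsWithin_mono T (fun x hx => ne_of_gt hx))
  have hev : ∀ᶠ ζ in 𝓝[>] T, slope u T ζ ≤ 0 := by
    filter_upwards [Ioc_mem_nhdsGT_of_mem (⟨le_rfl, hTb⟩ : T ∈ Ico T b)] with ζ hζ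
    have : u ζ - u T < 0 := by
      rw [huT]; linarith [hright ζ hζ.1 hζ.2]
    have hpos : 0 < ζ - T := sub_pos.mpr hζ.1
    rw [slope_def_field]
    exact (div_neg_of_neg_of_pos this hpos).le
  have : u' T ≤ 0 := le_of_tendsto hslope2 hev
  exact absurd (hder T hTa huT) (not_lt.mpr this)

lemma kpz_stay_below {u u' : ℝ → ℝ} {a K : ℝ}
    (hu : ∀ ξ ∈ Ici a, HasDerivAt u (u' ξ) ξ)
    (hua : u a ≤ K)
    (hder : ∀ ξ ∈ Ici a, u ξ = K → u' ξ < 0) :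
    ∀ ξ ∈ Ici a, u ξ ≤ K := by
  have h := kpz_stay_above (u := fun ξ => -u ξ) (u' := fun ξ => -u' ξ) (a := a) (K := -K)
    (fun ξ hξ => (hu ξ hξ).neg) (by simpa)
    (fun ξ hξ hK => by
      have : u ξ = K := by linarith [neg_eq_iff_eq_neg.mp hK]
      simpa using hder ξ hξ this)
  intro ξ hξ
  have := h ξ hξ
  simpa using neg_le_neg_iff.mp (by simpa using this)

lemma kpz_escape {u u' : ℝ → ℝ} {a K Kl ρ : ℝ} (ha : 0 < a) (hρ : 0 < ρ)
    (hu : ∀ ξ ∈ Ici a, HasDerivAt u (u' ξ) ξ)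
    (hlow : ∀ ξ ∈ Ici a, Kl ≤ u ξ)
    (hder : ∀ ξ ∈ Ici a, K ≤ u ξ → u' ξ ≤ -(ρ/ξ)) :
    ∃ b, a ≤ b ∧ u b < K := by
  by_contra h
  push_neg at h
  set v : ℝ → ℝ := fun ξ => u ξ + ρ * Real.log ξ with hv
  have hvd : ∀ ξ ∈ Ici a, HasDerivAt v (u' ξ + ρ * ξ⁻¹) ξ := fun ξ hξ =>
    (hu ξ hξ).add ((Real.hasDerivAt_log (ne_of_gt (lt_of_lt_of_le ha hξ))).const_mul ρ)
  have hmono : AntitoneOn v (Ici a) := by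
    apply antitoneOn_of_deriv_nonpos (convex_Ici a)
      (fun ξ hξ => ((hvd ξ hξ).continuousAt).continuousWithinAt)
      (fun ξ hξ => ((hvd ξ (le_of_lt (by simpa [interior_Ici] using hξ))).differentiableAt).differentiableWithinAt)
    intro ξ hξ
    rw [interior_Ici] at hξ
    have hξa : ξ ∈ Ici a := mem_Ici.mpr (le_of_lt hξ)
    have hxpos : 0 < ξ := lt_trans ha hξ
    rw [(hvd ξ hξa).deriv]
    have := hder ξ hξa (h ξ hξa)
    have : u' ξ ≤ -(ρ/ξ) := this
    have hinv : ρ * ξ⁻¹ = ρ / ξ := by rw [div_eq_mul_inv]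
    linarith [hinv ▸ le_refl (ρ * ξ⁻¹)]
  exfalso
  set B := (u a + ρ * Real.log a - Kl) / ρ with hB
  set ξ₀ := max a (Real.exp (B + 1)) with hξ₀
  have hξ₀a : a ≤ ξ₀ := le_max_left _ _
  have h1 : v ξ₀ ≤ v a := hmono (self_mem_Ici) hξ₀a hξ₀a
  have h2 : Kl ≤ u ξ₀ := hlow ξ₀ hξ₀a
  have h3 : Real.log ξ₀ ≤ B := by
    have : Kl + ρ * Real.log ξ₀ ≤ u a + ρ * Real.log a := by
      have : u ξ₀ + ρ * Real.log ξ₀ ≤ u a + ρ * Real.log a := h1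
      linarith
    rw [hB]
    rw [le_div_iff₀ hρ]
    linarith
  have h4 : B + 1 ≤ Real.log ξ₀ := by
    calc B + 1 = Real.log (Real.exp (B + 1)) := (Real.log_exp _).symm
      _ ≤ Real.log ξ₀ := Real.log_le_log (Real.exp_pos _) (le_max_right _ _)
  linarith

lemma kpz_escape' {u u' : ℝ → ℝ} {a K Ku ρ : ℝ} (ha : 0 < a) (hρ : 0 < ρ)
    (hu : ∀ ξ ∈ Ici a, HasDerivAt u (u' ξ) ξ)
    (hhigh : ∀ ξ ∈ Ici a, u ξ ≤ Ku)
    (hder : ∀ ξ ∈ Ici a, u ξ ≤ K → ρ/ξ ≤ u' ξ) :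
    ∃ b, a ≤ b ∧ K < u b := by
  obtain ⟨b, hb, hub⟩ := kpz_escape (u := fun ξ => -u ξ) (u' := fun ξ => -u' ξ)
    (a := a) (K := -K) (Kl := -Ku) (ρ := ρ) ha hρ
    (fun ξ hξ => (hu ξ hξ).neg)
    (fun ξ hξ => neg_le_neg (hhigh ξ hξ))
    (fun ξ hξ hK => by
      have hK' : -K ≤ -u ξ := hK
      have h1 : u ξ ≤ K := by linarith
      have := hder ξ hξ h1
      linarith)
  exact ⟨b, hb, by linarith⟩

set_option maxHeartbeats 2000000 in
lemma kpz_main (q lam : ℝ) (hq : 2 < q) (hlam : 0 < lam)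
    (f g w : ℝ → ℝ)
    (hfc : ContinuousOn f (Ici 0)) (hgc : ContinuousOn g (Ici 0))
    (hwc : ContinuousOn w (Ici 0))
    (hfd : ∀ ξ : ℝ, 0 < ξ → HasDerivAt f (g ξ) ξ)
    (hgd : ∀ ξ : ℝ, 0 < ξ → HasDerivAt g (w ξ) ξ)
    (hode : ∀ ξ : ℝ, 0 ≤ ξ →
      w ξ = -(lam * |g ξ| ^ q) + 1/2 * ξ * g ξ - (q-2)/(2*(q-1)) * f ξ)
    (hf0 : f 0 = -1) (hg0 : g 0 = 0) :
    Tendsto (fun ξ : ℝ => f ξ / ξ ^ (q / (q - 1))) atTop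
      (𝓝 ((1 / (lam * (q - 1)) * ((q - 1) / q) ^ q) ^ (1 / (q - 1)))) := by
  have hq1 : (1:ℝ) < q - 1 := by linarith
  have hq1' : (0:ℝ) < q - 1 := by linarith
  have hq0 : (0:ℝ) < q := by linarith
  set β : ℝ := (q-2)/(2*(q-1)) with hβdef
  have hβ : 0 < β := div_pos (by linarith) (by linarith)
  have hβhalf : β < 1/2 := by
    rw [hβdef, div_lt_iff₀ (by linarith)]; linarith
  set p : ℝ := 1/(q-1) with hpdef
  have hp : 0 < p := by positivity
  have hp1 : p < 1 := by rw [hpdef, div_lt_one hq1']; linarith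
  set γ : ℝ := q/(q-1) with hγdef
  have hγp : γ = 1 + p := by rw [hγdef, hpdef]; field_simp; ring
  have hγ1 : 1 < γ := by rw [hγp]; linarith
  have hpq : p * q = γ := by rw [hpdef, hγdef]; ring
  have hpq1 : p * (q-1) = 1 := by rw [hpdef]; field_simp
  set cstar : ℝ := (1/(lam*q)) ^ p with hcstardef
  have hcstarpos : 0 < cstar := by
    rw [hcstardef]; positivity
  set m₁ : ℝ := (1/(lam*(2*q-1))) ^ p with hm₁def
  have h2q : (0:ℝ) < 2*q-1 := by linarith
  have hm₁pos : 0 < m₁ := by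
    rw [hm₁def]; exact Real.rpow_pos_of_pos (div_pos one_pos (mul_pos hlam h2q)) p
  set M₁ : ℝ := (1/lam) ^ p with hM₁def
  have hM₁pos : 0 < M₁ := by rw [hM₁def]; positivity
  set δ : ℝ := 1/(2*(q-1)) - 1/(2*q-1) with hδdef
  have hδpos : 0 < δ := by
    rw [hδdef, sub_pos, div_lt_div_iff₀ (by linarith) (by linarith)]; linarith
  set δ₀ : ℝ := q/(2*q-1) - 1/2 with hδ₀def
  have hδ₀pos : 0 < δ₀ := by
    rw [hδ₀def, sub_pos, lt_div_iff₀ (by linarith)]; linarith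
  -- rpow identities
  have hrpowid : ∀ x : ℝ, 0 < x → (x ^ p) ^ (q-1) = x := by
    intro x hx
    rw [← Real.rpow_mul hx.le, hpq1, Real.rpow_one]
  have id1 : lam * cstar ^ (q-1) = 1/q := by
    rw [hcstardef, hrpowid _ (by positivity)]; field_simp
  have id2 : lam * q * m₁ ^ (q-1) = q/(2*q-1) := by
    rw [hm₁def, hrpowid _ (div_pos one_pos (mul_pos hlam h2q))]
    rw [mul_comm lam (2*q-1), ← div_div, eq_div_iff (ne_of_gt h2q)]
    field_simp [ne_of_gt h2q]
    exact div_self (by linarith)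
  have id3 : lam * q * M₁ ^ (q-1) = q := by
    rw [hM₁def, hrpowid _ (by positivity)]; field_simp
  set Cc : ℝ := (q-1)/q * cstar with hCcdef
  have hCcpos : 0 < Cc := by rw [hCcdef]; positivity
  have hγCc : γ * Cc = cstar := by rw [hCcdef, hγdef]; field_simp
  -- the constant in the statement is Cc
  have hbase : (0:ℝ) < (q-1)/q := div_pos hq1' hq0
  have hconst : (1 / (lam * (q - 1)) * ((q - 1) / q) ^ q) ^ p = Cc := by
    have e1 : ((q - 1) / q : ℝ) ^ q = ((q-1)/q) ^ (q-1) * ((q-1)/q) := by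
      rw [show ((q-1)/q:ℝ)^q = ((q-1)/q)^(q-1+1) by rw [sub_add_cancel],
        Real.rpow_add hbase, Real.rpow_one]
    have hX : 1/(lam*(q-1)) * ((q-1)/q)^q = ((q-1)/q)^(q-1) * (1/(lam*q)) := by
      rw [e1]; field_simp
    have e3 : (((q-1)/q:ℝ)^(q-1))^p = (q-1)/q := by
      rw [← Real.rpow_mul hbase.le, mul_comm (q-1) p, hpq1, Real.rpow_one]
    calc (1 / (lam * (q - 1)) * ((q - 1) / q) ^ q) ^ p
        = (((q-1)/q)^(q-1))^p * (1/(lam*q))^p := by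
          rw [hX, Real.mul_rpow (Real.rpow_nonneg hbase.le _) (by positivity)]
      _ = Cc := by rw [e3, hCcdef, hcstardef]
  have ecsq : cstar ^ q = cstar^(q-1) * cstar := by
    rw [show cstar^q = cstar^(q-1+1) by rw [sub_add_cancel], Real.rpow_add hcstarpos,
      Real.rpow_one]
  have hPc : cstar/2 - lam * cstar ^ q = β * Cc := by
    rw [ecsq, ← mul_assoc, id1, hβdef, hCcdef]
    field_simp
  have hq_ne : q ≠ 0 := ne_of_gt hq0
  have hw0 : w 0 = β := by
    have h := hode 0 le_rfl
    rw [hg0, hf0] at h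
    simpa [abs_zero, Real.zero_rpow hq_ne] using h
  -- derivative of w at points where g is positive
  have hwd : ∀ ξ : ℝ, 0 < ξ → 0 < g ξ →
      HasDerivAt w ((ξ/2 - lam*q*(g ξ)^(q-1)) * w ξ + (1/2 - β) * g ξ) ξ := by
    intro ξ hξ hgξ
    have hgcont : ContinuousAt g ξ := (hgd ξ hξ).continuousAt
    have hev : ∀ᶠ ζ in 𝓝 ξ, g ζ ∈ Ioi (0:ℝ) :=
      hgcont.eventually_mem (isOpen_Ioi.mem_nhds hgξ)
    have hev2 : ∀ᶠ ζ in 𝓝 ξ, (0:ℝ) < ζ := eventually_gt_nhds hξ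
    have hEq : w =ᶠ[𝓝 ξ] fun ζ => -(lam * (g ζ)^q) + 1/2*ζ*g ζ - β * f ζ := by
      filter_upwards [hev, hev2] with ζ h1 h2
      rw [hode ζ h2.le, abs_of_pos h1]
    have hA : HasDerivAt (fun ζ => (g ζ)^q) (w ξ * q * (g ξ)^(q-1)) ξ :=
      (hgd ξ hξ).rpow_const (Or.inl (ne_of_gt hgξ))
    have hB : HasDerivAt (fun ζ => 1/2*ζ*g ζ) (1/2*1 * g ξ + 1/2*ξ * w ξ) ξ :=
      ((hasDerivAt_id ξ).const_mul (1/2:ℝ)).mul (hgd ξ hξ)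
    have hC : HasDerivAt (fun ζ => β * f ζ) (β * g ξ) ξ := (hfd ξ hξ).const_mul β
    have hall := ((hA.const_mul lam).neg.add hB).sub hC
    have := hall.congr_of_eventuallyEq hEq
    refine this.congr_deriv ?_
    ring
  -- Step 1: w is positive on [0,∞)
  have hwpos : ∀ ξ : ℝ, 0 ≤ ξ → 0 < w ξ := by
    by_contra hcon
    push_neg at hcon
    obtain ⟨ξ₀, hξ₀, hwξ₀⟩ := hcon
    have hScl : IsClosed (Icc 0 ξ₀ ∩ w ⁻¹' (Iic 0)) :=
      ((hwc.mono (Icc_subset_Ici_self)).preimage_isClosed_of_isClosed isClosed_Icc isClosed_Iic)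
    have hSne : (Icc 0 ξ₀ ∩ w ⁻¹' (Iic 0)).Nonempty := ⟨ξ₀, ⟨hξ₀, le_rfl⟩, hwξ₀⟩
    have hSbdd : BddBelow (Icc 0 ξ₀ ∩ w ⁻¹' (Iic 0)) := ⟨0, fun x hx => hx.1.1⟩
    set T := sInf (Icc 0 ξ₀ ∩ w ⁻¹' (Iic 0)) with hTdef
    have hTS : T ∈ Icc 0 ξ₀ ∩ w ⁻¹' (Iic 0) := hScl.csInf_mem hSne hSbdd
    have hT0 : 0 ≤ T := hTS.1.1
    have hTpos : 0 < T := by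
      rcases eq_or_lt_of_le hT0 with h | h
      · exfalso; rw [← h] at hTS
        have : w 0 ≤ 0 := hTS.2
        rw [hw0] at this; linarith
      · exact h
    have hleft : ∀ ζ, 0 ≤ ζ → ζ < T → 0 < w ζ := by
      intro ζ h1 h2
      by_contra h3
      push_neg at h3
      exact absurd (csInf_le hSbdd ⟨⟨h1, h2.le.trans hTS.1.2⟩, h3⟩) (not_le.mpr h2)
    -- g is strictly increasing on [0,T], so g T > 0
    have hgsm : StrictMonoOn g (Icc 0 T) := by
      apply strictMonoOn_of_deriv_pos (convex_Icc 0 T)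
        (hgc.mono (Icc_subset_Ici_self))
      intro x hx
      rw [interior_Icc] at hx
      rw [(hgd x hx.1).deriv]
      exact hleft x hx.1.le hx.2
    have hgT : 0 < g T := by
      have := hgsm (left_mem_Icc.mpr hT0) (right_mem_Icc.mpr hT0) hTpos
      rwa [hg0] at this
    have hwT : w T = 0 := by
      refine le_antisymm hTS.2 ?_
      have hten : Tendsto w (𝓝[Ico 0 T] T) (𝓝 (w T)) :=
        (hwc T (hT0.trans (le_refl T))).mono_left (nhdsWithin_mono T Ico_subset_Ici_self)
      have hne : (𝓝[Ico 0 T] T).NeBot := right_nhdsWithin_Ico_neBot hTpos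
      exact ge_of_tendsto hten (eventually_nhdsWithin_of_forall
        (fun ζ hζ => (hleft ζ hζ.1 hζ.2).le))
    -- slope from the left is nonpositive
    have hderT := hwd T hTpos hgT
    have hslope : Tendsto (slope w T) (𝓝[<] T) (𝓝 ((T/2 - lam*q*(g T)^(q-1)) * w T + (1/2 - β) * g T)) :=
      (hasDerivAt_iff_tendsto_slope.mp hderT).mono_left
        (nhdsWithin_mono T (fun x hx => ne_of_lt hx))
    have hev : ∀ᶠ ζ in 𝓝[<] T, slope w T ζ ≤ 0 := by
      filter_upwards [Ioo_mem_nhdsLT_of_mem (⟨hTpos, le_rfl⟩ : T ∈ Ioc 0 T)] with ζ hζ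
      rw [slope_def_field]
      have h1 : 0 < w ζ := hleft ζ hζ.1.le hζ.2
      have h2 : ζ - T < 0 := sub_neg.mpr hζ.2
      have : 0 < w ζ - w T := by rw [hwT]; linarith
      exact le_of_lt (div_neg_of_pos_of_neg this h2)
    have hle : (T/2 - lam*q*(g T)^(q-1)) * w T + (1/2 - β) * g T ≤ 0 :=
      le_of_tendsto hslope hev
    rw [hwT] at hle
    simp only [mul_zero, zero_add] at hle
    exact absurd hle (not_le.mpr (mul_pos (by linarith : (0:ℝ) < 1/2 - β) hgT))
  have hgsm : StrictMonoOn g (Ici 0) := by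
    apply strictMonoOn_of_deriv_pos (convex_Ici 0) hgc
    intro x hx
    rw [interior_Ici] at hx
    rw [(hgd x hx).deriv]
    exact hwpos x hx.le
  have hgpos : ∀ ξ : ℝ, 0 < ξ → 0 < g ξ := by
    intro ξ hξ
    have := hgsm self_mem_Ici (mem_Ici.mpr hξ.le) hξ
    rwa [hg0] at this
  have hgmono : MonotoneOn g (Ici 0) := hgsm.monotoneOn
  have hfmono : MonotoneOn f (Ici 0) := by
    apply monotoneOn_of_deriv_nonneg (convex_Ici 0) hfc
    · intro x hx
      rw [interior_Ici] at hx
      exact ((hfd x hx).differentiableAt).differentiableWithinAt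
    · intro x hx
      rw [interior_Ici] at hx
      rw [(hfd x hx).deriv]
      exact (hgpos x hx).le
  have hflb : ∀ ξ : ℝ, 0 ≤ ξ → -1 ≤ f ξ := by
    intro ξ hξ
    have := hfmono self_mem_Ici (mem_Ici.mpr hξ) hξ
    rwa [hf0] at this
  have hfub : ∀ ξ : ℝ, 0 < ξ → f ξ ≤ ξ * g ξ - 1 := by
    intro ξ hξ
    obtain ⟨c, hc, hceq⟩ := exists_hasDerivAt_eq_slope f g hξ
      (hfc.mono (Icc_subset_Ici_self)) (fun x hx => hfd x hx.1)
    rw [hf0, sub_zero, sub_neg_eq_add] at hceq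
    have hgcle : g c ≤ g ξ := hgmono (mem_Ici.mpr hc.1.le) (mem_Ici.mpr hξ.le) hc.2.le
    have h0 : g c * ξ = f ξ + 1 := by
      rw [hceq]; field_simp
    have h1 : g c * ξ ≤ g ξ * ξ := mul_le_mul_of_nonneg_right hgcle hξ.le
    linarith [h0, h1]
  have id2' : lam * m₁ ^ (q-1) = 1/(2*q-1) := by
    rw [hm₁def, hrpowid _ (div_pos one_pos (mul_pos hlam h2q))]
    rw [one_div, mul_inv, ← mul_assoc, mul_inv_cancel₀ (ne_of_gt hlam), one_mul, one_div]
  have hβc : 1/2 - β = 1/(2*(q-1)) := by rw [hβdef]; field_simp; ring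
  clear_value β p γ cstar m₁ M₁ δ δ₀ Cc
  have hkey : ∀ ξ : ℝ, 0 < ξ → g ξ * ((1/2 - β) * ξ - lam * (g ξ)^(q-1)) ≤ w ξ := by
    intro ξ hξ
    have hode' := hode ξ hξ.le
    rw [abs_of_pos (hgpos ξ hξ)] at hode'
    have e : (g ξ)^q = (g ξ)^(q-1) * g ξ := by
      rw [show (g ξ)^q = (g ξ)^(q-1+1) by rw [sub_add_cancel], Real.rpow_add (hgpos ξ hξ),
        Real.rpow_one]
    have hf' : f ξ ≤ ξ * g ξ := by linarith [hfub ξ hξ]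
    have h2 : β * f ξ ≤ β * (ξ * g ξ) := mul_le_mul_of_nonneg_left hf' hβ.le
    rw [hode', e]
    ring_nf
    ring_nf at h2
    linarith [h2]
  have hδkey : ∀ ξ : ℝ, 0 < ξ → g ξ ≤ m₁ * ξ^p → δ * ξ * g ξ ≤ w ξ := by
    intro ξ hξ hgle
    have h1 : (g ξ)^(q-1) ≤ m₁^(q-1) * ξ := by
      calc (g ξ)^(q-1) ≤ (m₁ * ξ^p)^(q-1) :=
            Real.rpow_le_rpow (hgpos ξ hξ).le hgle (by linarith)
        _ = m₁^(q-1) * ξ := by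
            rw [Real.mul_rpow hm₁pos.le (Real.rpow_nonneg hξ.le p), hrpowid ξ hξ]
    have h2 := hkey ξ hξ
    have h3 : lam * (g ξ)^(q-1) ≤ 1/(2*q-1) * ξ := by
      calc lam * (g ξ)^(q-1) ≤ lam * (m₁^(q-1) * ξ) := mul_le_mul_of_nonneg_left h1 hlam.le
        _ = 1/(2*q-1) * ξ := by rw [← mul_assoc, id2']
    have hδe : δ = (1/2 - β) - 1/(2*q-1) := by rw [hδdef, hβdef]; field_simp; ring
    have h4 : g ξ * (δ * ξ) ≤ g ξ * ((1/2 - β) * ξ - lam * (g ξ)^(q-1)) := by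
      apply mul_le_mul_of_nonneg_left _ (hgpos ξ hξ).le
      rw [hδe]; linarith
    have h5 : δ * ξ * g ξ = g ξ * (δ * ξ) := by ring
    rw [h5]; exact le_trans h4 h2
  -- Step: eventual lower bound for g
  set Ξ₀ : ℝ := 1 + p/δ with hΞ₀def
  have hpδ : 0 ≤ p/δ := le_of_lt (div_pos hp hδpos)
  have hΞ₀1 : 1 ≤ Ξ₀ := by rw [hΞ₀def]; linarith
  have hΞ₀pos : 0 < Ξ₀ := lt_of_lt_of_le one_pos hΞ₀1
  have hΞ₀δ : ∀ ξ : ℝ, Ξ₀ ≤ ξ → p < δ * ξ^2 := by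
    intro ξ hξ
    have h1 : (1:ℝ) ≤ ξ := le_trans hΞ₀1 hξ
    have h2 : ξ ≤ ξ^2 := by
      calc ξ = ξ * 1 := (mul_one ξ).symm
        _ ≤ ξ * ξ := mul_le_mul_of_nonneg_left h1 (by linarith)
        _ = ξ^2 := (sq ξ).symm
    have h3 : δ * (p/δ) = p := by
      rw [mul_comm δ (p/δ), div_mul_cancel₀ p (ne_of_gt hδpos)]
    have h4 : δ * ξ ≤ δ * ξ^2 := mul_le_mul_of_nonneg_left h2 hδpos.le
    have h5 : δ * Ξ₀ ≤ δ * ξ := mul_le_mul_of_nonneg_left hξ hδpos.le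
    have h6 : δ * Ξ₀ = δ + p := by rw [hΞ₀def, mul_add, mul_one, h3]
    linarith
  have hcross : ∃ b, Ξ₀ ≤ b ∧ m₁ * b^p ≤ g b := by
    by_contra hno
    push_neg at hno
    have hgΞ₀ : 0 < g Ξ₀ := hgpos _ hΞ₀pos
    set A : ℝ := δ * g Ξ₀ with hAdef
    have hApos : 0 < A := mul_pos hδpos hgΞ₀
    have hwlb : ∀ ξ : ℝ, Ξ₀ ≤ ξ → A * ξ ≤ w ξ := by
      intro ξ hξ
      have hξpos : 0 < ξ := lt_of_lt_of_le hΞ₀pos hξ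
      have h1 := hδkey ξ hξpos (le_of_lt (hno ξ hξ))
      have h2 : g Ξ₀ ≤ g ξ := hgmono (mem_Ici.mpr hΞ₀pos.le) (mem_Ici.mpr hξpos.le) hξ
      have h3 : δ * ξ * g Ξ₀ ≤ δ * ξ * g ξ :=
        mul_le_mul_of_nonneg_left h2 (le_of_lt (mul_pos hδpos hξpos))
      have h4 : A * ξ = δ * ξ * g Ξ₀ := by rw [hAdef]; ring
      linarith
    have hGmono : MonotoneOn (fun ξ => g ξ - A/2 * ξ^2) (Ici Ξ₀) := by
      apply monotoneOn_of_deriv_nonneg (convex_Ici Ξ₀)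
      · exact (hgc.mono (Ici_subset_Ici.mpr hΞ₀pos.le)).sub
          ((continuous_const.mul (continuous_pow 2)).continuousOn)
      · intro ξ hξ
        rw [interior_Ici] at hξ
        have hξpos : 0 < ξ := lt_trans hΞ₀pos hξ
        exact (((hgd ξ hξpos).sub ((hasDerivAt_pow 2 ξ).const_mul (A/2))).differentiableAt).differentiableWithinAt
      · intro ξ hξ
        rw [interior_Ici] at hξ
        have hξpos : 0 < ξ := lt_trans hΞ₀pos hξ
        rw [HasDerivAt.deriv (f := fun ξ => g ξ - A/2 * ξ^2) ((hgd ξ hξpos).sub ((hasDerivAt_pow 2 ξ).const_mul (A/2)))]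
        have h := hwlb ξ hξ.le
        have e : A/2 * ((2:ℕ) * ξ^(2-1)) = A * ξ := by norm_num; ring
        norm_num at e ⊢
        linarith
    have hglb : ∀ ξ : ℝ, Ξ₀ ≤ ξ → g Ξ₀ + A/2 * ξ^2 - A/2 * Ξ₀^2 ≤ g ξ := by
      intro ξ hξ
      have := hGmono (self_mem_Ici) (mem_Ici.mpr hξ) hξ
      linarith [this]
    -- contradiction at a large point
    set K₀ : ℝ := A/2 * Ξ₀^2 with hK₀def
    have hK₀pos : 0 < K₀ := by
      rw [hK₀def]; exact mul_pos (by linarith) (pow_pos hΞ₀pos 2)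
    set ξb : ℝ := max Ξ₀ (2*(m₁ + K₀ + 1)/A) with hξbdef
    have hξbΞ : Ξ₀ ≤ ξb := le_max_left _ _
    have hξb1 : (1:ℝ) ≤ ξb := le_trans hΞ₀1 hξbΞ
    have hξbpos : 0 < ξb := lt_of_lt_of_le one_pos hξb1
    have h1 : 2*(m₁ + K₀ + 1)/A ≤ ξb := le_max_right _ _
    have h2 : m₁ + K₀ + 1 ≤ A/2 * ξb := by
      rw [div_le_iff₀ hApos] at h1
      linarith
    have h3 : (m₁ + K₀ + 1) * ξb ≤ (A/2 * ξb) * ξb :=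
      mul_le_mul_of_nonneg_right h2 (le_of_lt hξbpos)
    have h4 : m₁ * ξb + K₀ + 1 ≤ (m₁ + K₀ + 1) * ξb := by
      have : (0:ℝ) ≤ (K₀ + 1) * (ξb - 1) := mul_nonneg (by linarith) (by linarith)
      ring_nf
      ring_nf at this
      linarith
    have h5 : g ξb < m₁ * ξb^p := hno ξb hξbΞ
    have h6 : ξb^p ≤ ξb := by
      calc ξb^p ≤ ξb^(1:ℝ) := Real.rpow_le_rpow_of_exponent_le hξb1 (le_of_lt hp1)
        _ = ξb := Real.rpow_one ξb
    have h7 : m₁ * ξb^p ≤ m₁ * ξb := mul_le_mul_of_nonneg_left h6 hm₁pos.le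
    have h8 := hglb ξb hξbΞ
    have h9 : (A/2 * ξb) * ξb = A/2 * ξb^2 := by ring
    linarith [hgΞ₀]
  obtain ⟨b₀, hb₀Ξ, hb₀g⟩ := hcross
  have hb₀pos : 0 < b₀ := lt_of_lt_of_le hΞ₀pos hb₀Ξ
  have hlow : ∀ ξ : ℝ, b₀ ≤ ξ → m₁ * ξ^p ≤ g ξ := by
    have hstay := kpz_stay_above (u := fun ξ => g ξ - m₁ * ξ^p)
      (u' := fun ξ => w ξ - m₁ * (p * ξ^(p-1))) (a := b₀) (K := 0)
      (fun ξ hξ => by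
        have hξpos : 0 < ξ := lt_of_lt_of_le hb₀pos hξ
        exact (hgd ξ hξpos).sub
          ((Real.hasDerivAt_rpow_const (Or.inl (ne_of_gt hξpos))).const_mul m₁))
      (by simpa using sub_nonneg.mpr hb₀g)
      (fun ξ hξ hzero => by
        have hξpos : 0 < ξ := lt_of_lt_of_le hb₀pos hξ
        have hgeq : g ξ = m₁ * ξ^p := by
          have : g ξ - m₁ * ξ^p = 0 := hzero
          linarith
        have hw := hδkey ξ hξpos (le_of_eq hgeq)
        have hΞξ : Ξ₀ ≤ ξ := le_trans hb₀Ξ hξ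
        have hpd : p < δ * ξ^2 := hΞ₀δ ξ hΞξ
        have hAps : 0 < m₁ * ξ^(p-1) := mul_pos hm₁pos (Real.rpow_pos_of_pos hξpos _)
        have e' : ξ^(p-1) = ξ^p / ξ := by rw [Real.rpow_sub hξpos, Real.rpow_one]
        have h7 : δ * ξ * (m₁ * ξ^p) = (m₁ * ξ^(p-1)) * (δ * ξ^2) := by
          rw [e']; field_simp
        have h8 : (m₁ * ξ^(p-1)) * p < (m₁ * ξ^(p-1)) * (δ * ξ^2) :=
          mul_lt_mul_of_pos_left hpd hAps
        have h9 : m₁ * (p * ξ^(p-1)) = (m₁ * ξ^(p-1)) * p := by ring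
        have h10 : δ * ξ * g ξ = δ * ξ * (m₁ * ξ^p) := by rw [hgeq]
        show 0 < w ξ - m₁ * (p * ξ^(p-1))
        linarith)
    intro ξ hξ
    have h := hstay ξ hξ
    have h' : (0:ℝ) ≤ g ξ - m₁ * ξ^p := h
    linarith
  -- Step: eventual upper bound for g
  set a₂ : ℝ := max b₀ (2*β/m₁ + 1) with ha₂def
  have ha₂b₀ : b₀ ≤ a₂ := le_max_left _ _
  have ha₂1 : (1:ℝ) ≤ a₂ := le_trans (le_trans hΞ₀1 hb₀Ξ) ha₂b₀
  have ha₂pos : 0 < a₂ := lt_of_lt_of_le one_pos ha₂1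
  have hup : ∀ ξ : ℝ, a₂ ≤ ξ → g ξ ≤ M₁ * ξ^p := by
    intro ξ hξ
    have hξpos : 0 < ξ := lt_of_lt_of_le ha₂pos hξ
    have hξ1 : (1:ℝ) ≤ ξ := le_trans ha₂1 hξ
    have hgξ : 0 < g ξ := hgpos ξ hξpos
    have hode' := hode ξ hξpos.le
    rw [abs_of_pos hgξ] at hode'
    have e : (g ξ)^q = (g ξ)^(q-1) * g ξ := by
      rw [show (g ξ)^q = (g ξ)^(q-1+1) by rw [sub_add_cancel], Real.rpow_add hgξ,
        Real.rpow_one]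
    rw [e] at hode'
    have h2 : -(β * f ξ) ≤ β := by
      have := mul_le_mul_of_nonneg_left (hflb ξ hξpos.le) hβ.le
      linarith
    have hw := hwpos ξ hξpos.le
    have h1 : lam * ((g ξ)^(q-1) * g ξ) ≤ 1/2 * ξ * g ξ + β := by linarith
    have h5 : (1:ℝ) ≤ ξ^p := by
      calc (1:ℝ) = (1:ℝ)^p := (Real.one_rpow p).symm
        _ ≤ ξ^p := Real.rpow_le_rpow (by norm_num) hξ1 hp.le
    have h4 : m₁ * ξ^p ≤ g ξ := hlow ξ (le_trans ha₂b₀ hξ)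
    have h6 : m₁ ≤ g ξ := by
      calc m₁ = m₁ * 1 := (mul_one m₁).symm
        _ ≤ m₁ * ξ^p := mul_le_mul_of_nonneg_left h5 hm₁pos.le
        _ ≤ g ξ := h4
    have h7 : 2*β/m₁ + 1 ≤ ξ := le_trans (le_max_right _ _) hξ
    have h3 : β ≤ 1/2 * ξ * g ξ := by
      have e1 : 2*β/m₁ * m₁ = 2*β := div_mul_cancel₀ _ (ne_of_gt hm₁pos)
      have e2 : (2*β/m₁ + 1) * m₁ ≤ ξ * m₁ := mul_le_mul_of_nonneg_right h7 hm₁pos.le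
      have e3 : ξ * m₁ ≤ ξ * g ξ := mul_le_mul_of_nonneg_left h6 hξpos.le
      have e4 : (2*β/m₁ + 1) * m₁ = 2*β + m₁ := by rw [add_mul, e1, one_mul]
      linarith
    have h8 : lam * (g ξ)^(q-1) ≤ ξ := by
      have h9 : lam * (g ξ)^(q-1) * g ξ ≤ ξ * g ξ := by
        rw [mul_assoc]; linarith
      exact le_of_mul_le_mul_right h9 hgξ
    have h10 : (g ξ)^(q-1) ≤ ξ/lam := by
      rw [le_div_iff₀ hlam]; linarith [h8]
    have h11 : ((g ξ)^(q-1))^p ≤ (ξ/lam)^p :=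
      Real.rpow_le_rpow (Real.rpow_nonneg hgξ.le _) h10 hp.le
    have h12 : ((g ξ)^(q-1))^p = g ξ := by
      rw [← Real.rpow_mul hgξ.le, mul_comm (q-1) p, hpq1, Real.rpow_one]
    have h13 : (ξ/lam)^p = M₁ * ξ^p := by
      rw [show ξ/lam = 1/lam * ξ by ring,
        Real.mul_rpow (by positivity) hξpos.le, hM₁def]
    rw [h12, h13] at h11
    exact h11
  -- Step: w is eventually bounded
  set W : ℝ := max (w a₂) 0 + (1/2)*M₁/δ₀ + 1 with hWdef
  have hMδpos : 0 < (1/2)*M₁/δ₀ := div_pos (by linarith) hδ₀pos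
  have hWpos : 0 < W := by
    have h1 : (0:ℝ) ≤ w a₂ ⊔ 0 := le_sup_right
    rw [hWdef]; linarith
  have hW1 : w a₂ ≤ W := by
    have h1 : w a₂ ≤ w a₂ ⊔ 0 := le_sup_left
    rw [hWdef]; linarith
  have hWC : (1/2)*M₁ + δ₀ ≤ δ₀ * W := by
    have e1 : δ₀ * ((1/2)*M₁/δ₀) = (1/2)*M₁ := by
      rw [mul_comm, div_mul_cancel₀ _ (ne_of_gt hδ₀pos)]
    have e2 : (0:ℝ) ≤ δ₀ * (w a₂ ⊔ 0) := mul_nonneg hδ₀pos.le le_sup_right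
    rw [hWdef, mul_add, mul_add, e1, mul_one]
    linarith
  clear_value W
  have hwbd : ∀ ξ : ℝ, a₂ ≤ ξ → w ξ ≤ W := by
    have hstay := kpz_stay_below (u := w)
      (u' := fun ξ => (ξ/2 - lam*q*(g ξ)^(q-1)) * w ξ + (1/2 - β) * g ξ)
      (a := a₂) (K := W)
      (fun ξ hξ => by
        have hξpos : 0 < ξ := lt_of_lt_of_le ha₂pos hξ
        exact hwd ξ hξpos (hgpos ξ hξpos))
      hW1
      (fun ξ hξ hWeq => by
        have hξpos : 0 < ξ := lt_of_lt_of_le ha₂pos hξ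
        have hξ1 : (1:ℝ) ≤ ξ := le_trans ha₂1 hξ
        have hgξ : 0 < g ξ := hgpos ξ hξpos
        have h4 : m₁ * ξ^p ≤ g ξ := hlow ξ (le_trans ha₂b₀ hξ)
        have hA1 : m₁^(q-1) * ξ ≤ (g ξ)^(q-1) := by
          calc m₁^(q-1) * ξ = (m₁ * ξ^p)^(q-1) := by
                rw [Real.mul_rpow hm₁pos.le (Real.rpow_nonneg hξpos.le p), hrpowid ξ hξpos]
            _ ≤ (g ξ)^(q-1) :=
                Real.rpow_le_rpow
                  (mul_nonneg hm₁pos.le (Real.rpow_nonneg hξpos.le p)) h4 (by linarith)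
        have hA2 : q/(2*q-1) * ξ ≤ lam * q * (g ξ)^(q-1) := by
          have := mul_le_mul_of_nonneg_left hA1 (by positivity : (0:ℝ) ≤ lam * q)
          calc q/(2*q-1) * ξ = lam * q * (m₁^(q-1) * ξ) := by
                rw [show lam * q * (m₁^(q-1) * ξ) = q * (lam * m₁^(q-1)) * ξ by ring, id2']
                ring
            _ ≤ lam * q * (g ξ)^(q-1) := this
        have hexpr : ξ/2 - lam*q*(g ξ)^(q-1) ≤ -(δ₀ * ξ) := by
          rw [hδ₀def]; ring_nf; ring_nf at hA2; linarith
        have hm1 : (ξ/2 - lam*q*(g ξ)^(q-1)) * w ξ ≤ -(δ₀ * ξ) * W := by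
          rw [hWeq]
          exact mul_le_mul_of_nonneg_right hexpr hWpos.le
        have hgM : g ξ ≤ M₁ * ξ := by
          have := hup ξ hξ
          have h6 : ξ^p ≤ ξ := by
            calc ξ^p ≤ ξ^(1:ℝ) := Real.rpow_le_rpow_of_exponent_le hξ1 (le_of_lt hp1)
              _ = ξ := Real.rpow_one ξ
          have h7 : M₁ * ξ^p ≤ M₁ * ξ := mul_le_mul_of_nonneg_left h6 hM₁pos.le
          linarith
        have hm2 : (1/2 - β) * g ξ ≤ 1/2 * (M₁ * ξ) := by
          have h8 : (1/2 - β) * g ξ ≤ 1/2 * g ξ :=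
            mul_le_mul_of_nonneg_right (by linarith) hgξ.le
          have h9 : 1/2 * g ξ ≤ 1/2 * (M₁ * ξ) := by linarith
          linarith
        have hC : (1/2)*M₁ + δ₀ ≤ δ₀ * W := hWC
        have hC2 : (1/2)*M₁*ξ ≤ (δ₀*W - δ₀)*ξ :=
          mul_le_mul_of_nonneg_right (by linarith) hξpos.le
        have hfin : -(δ₀*ξ)*W + 1/2*(M₁*ξ) ≤ -(δ₀*ξ) := by ring_nf; ring_nf at hC2; linarith
        have hξd : 0 < δ₀ * ξ := mul_pos hδ₀pos hξpos
        show (ξ/2 - lam*q*(g ξ)^(q-1)) * w ξ + (1/2 - β) * g ξ < 0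
        linarith)
    exact fun ξ hξ => hstay ξ hξ
  -- ============ Final phase ============
  have hγ1' : γ - 1 = p := by rw [hγp]; ring
  have eγξ : ∀ ξ : ℝ, 0 < ξ → ξ^γ = ξ^p * ξ := by
    intro ξ hξ
    rw [hγp, Real.rpow_add hξ, Real.rpow_one, mul_comm]
  -- derivative of the rescaled profile
  have hYd : ∀ ξ : ℝ, 0 < ξ →
      HasDerivAt (fun ζ => f ζ / ζ^γ) ((g ξ/ξ^p - γ*(f ξ/ξ^γ))/ξ) ξ := by
    intro ξ hξ
    have hξp : (0:ℝ) < ξ^p := Real.rpow_pos_of_pos hξ p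
    have hξγ : (0:ℝ) < ξ^γ := Real.rpow_pos_of_pos hξ γ
    have hD : HasDerivAt (fun ζ : ℝ => ζ^γ) (γ * ξ^(γ-1)) ξ :=
      Real.hasDerivAt_rpow_const (Or.inl (ne_of_gt hξ))
    have hQ := (hfd ξ hξ).div hD (ne_of_gt hξγ)
    refine hQ.congr_deriv ?_
    rw [hγ1', eγξ ξ hξ]
    field_simp
  -- pointwise inequality in the region above the limit
  have hUPpt : ∀ η : ℝ, 0 < η → ∀ ξ : ℝ, a₂ ≤ ξ → (Cc + η) * ξ^γ ≤ f ξ →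
      g ξ/ξ^p - γ*(f ξ/ξ^γ) ≤ -(γ*η) := by
    intro η hη ξ hξ hfY
    have hξpos : 0 < ξ := lt_of_lt_of_le ha₂pos hξ
    have hξp : (0:ℝ) < ξ^p := Real.rpow_pos_of_pos hξpos p
    have hξγ : (0:ℝ) < ξ^γ := Real.rpow_pos_of_pos hξpos γ
    have hgξ : 0 < g ξ := hgpos ξ hξpos
    have hZ0 : 0 ≤ g ξ/ξ^p := le_of_lt (div_pos hgξ hξp)
    have hw := hwpos ξ hξpos.le
    have hode' := hode ξ hξpos.le
    rw [abs_of_pos hgξ] at hode'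
    have h1 : lam * (g ξ)^q ≤ 1/2*ξ*g ξ - β*f ξ := by linarith
    have h2 : lam * (g ξ)^q / ξ^γ ≤ (1/2*ξ*g ξ - β*f ξ)/ξ^γ :=
      (div_le_div_iff_of_pos_right hξγ).mpr h1
    have e1 : lam * (g ξ)^q / ξ^γ = lam * (g ξ/ξ^p)^q := by
      rw [Real.div_rpow hgξ.le hξp.le, ← Real.rpow_mul hξpos.le, hpq, mul_div_assoc]
    have e2 : (1/2*ξ*g ξ - β*f ξ)/ξ^γ = (g ξ/ξ^p)/2 - β*(f ξ/ξ^γ) := by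
      rw [eγξ ξ hξpos]
      field_simp
    rw [e1, e2] at h2
    -- tangent line inequality at cstar
    have htan := kpz_tangent hcstarpos hZ0 (by linarith : (1:ℝ) ≤ q)
    have htan2 : lam * cstar^q + (g ξ/ξ^p - cstar) ≤ lam * (g ξ/ξ^p)^q := by
      have h3 := mul_le_mul_of_nonneg_left htan hlam.le
      have e3 : lam * q * cstar^(q-1) = 1 := by
        rw [show lam * q * cstar^(q-1) = q * (lam * cstar^(q-1)) by ring, id1]
        field_simp
      have e4 : lam * (cstar^q + q * cstar^(q-1) * (g ξ/ξ^p - cstar))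
          = lam * cstar^q + (lam * q * cstar^(q-1)) * (g ξ/ξ^p - cstar) := by ring
      rw [e4, e3, one_mul] at h3
      exact h3
    -- f ξ/ξ^γ ≥ Cc + η
    have hY : Cc + η ≤ f ξ/ξ^γ := by
      rw [le_div_iff₀ hξγ]
      exact hfY
    have hβY : β*(Cc + η) ≤ β*(f ξ/ξ^γ) := mul_le_mul_of_nonneg_left hY hβ.le
    -- combine: Z ≤ cstar - 2βη
    have hZle : g ξ/ξ^p ≤ cstar - 2*(β*η) := by linarith [hPc]
    have hγY : γ*(Cc + η) ≤ γ*(f ξ/ξ^γ) :=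
      mul_le_mul_of_nonneg_left hY (by linarith)
    have hβη : 0 < β*η := mul_pos hβ hη
    have : γ*Cc = cstar := hγCc
    linarith
  -- pointwise inequality in the region below the limit
  have hDOWNpt : ∀ η : ℝ, 0 < η → ∀ ξ : ℝ, a₂ ≤ ξ → w ξ/ξ^γ ≤ β*η/2 →
      f ξ ≤ (Cc - η) * ξ^γ → γ*η ≤ g ξ/ξ^p - γ*(f ξ/ξ^γ) := by
    intro η hη ξ hξ hεb hfY
    have hξpos : 0 < ξ := lt_of_lt_of_le ha₂pos hξ
    have hξp : (0:ℝ) < ξ^p := Real.rpow_pos_of_pos hξpos p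
    have hξγ : (0:ℝ) < ξ^γ := Real.rpow_pos_of_pos hξpos γ
    have hgξ : 0 < g ξ := hgpos ξ hξpos
    have hode' := hode ξ hξpos.le
    rw [abs_of_pos hgξ] at hode'
    -- exact relation divided by ξ^γ
    have h1 : lam * (g ξ)^q = 1/2*ξ*g ξ - β*f ξ - w ξ := by linarith
    have h2 : lam * (g ξ)^q / ξ^γ = (1/2*ξ*g ξ - β*f ξ - w ξ)/ξ^γ := by rw [h1]
    have e1 : lam * (g ξ)^q / ξ^γ = lam * (g ξ/ξ^p)^q := by
      rw [Real.div_rpow hgξ.le hξp.le, ← Real.rpow_mul hξpos.le, hpq, mul_div_assoc]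
    have e2 : (1/2*ξ*g ξ - β*f ξ - w ξ)/ξ^γ
        = (g ξ/ξ^p)/2 - β*(f ξ/ξ^γ) - w ξ/ξ^γ := by
      rw [eγξ ξ hξpos]
      field_simp
    rw [e1, e2] at h2
    -- Z ≥ m₁
    have hZm : m₁ ≤ g ξ/ξ^p := by
      rw [le_div_iff₀ hξp]
      exact hlow ξ (le_trans ha₂b₀ hξ)
    -- tangent at Z toward cstar
    have hZpos : 0 < g ξ/ξ^p := div_pos hgξ hξp
    have htan := kpz_tangent hZpos hcstarpos.le (by linarith : (1:ℝ) ≤ q)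
    -- multiply by lam
    have htan2 : lam * (g ξ/ξ^p)^q + (lam*q*(g ξ/ξ^p)^(q-1)) * (cstar - g ξ/ξ^p)
        ≤ lam * cstar^q := by
      have h3 := mul_le_mul_of_nonneg_left htan hlam.le
      have e4 : lam * ((g ξ/ξ^p)^q + q * (g ξ/ξ^p)^(q-1) * (cstar - g ξ/ξ^p))
          = lam * (g ξ/ξ^p)^q + (lam*q*(g ξ/ξ^p)^(q-1)) * (cstar - g ξ/ξ^p) := by ring
      rw [e4] at h3
      exact h3
    -- coefficient bound  S ≥ q/(2q-1) > 1/2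
    have hS : q/(2*q-1) ≤ lam*q*(g ξ/ξ^p)^(q-1) := by
      have h4 : m₁^(q-1) ≤ (g ξ/ξ^p)^(q-1) :=
        Real.rpow_le_rpow hm₁pos.le hZm (by linarith)
      have h5 := mul_le_mul_of_nonneg_left h4 (by positivity : (0:ℝ) ≤ lam*q)
      calc q/(2*q-1) = lam*q*m₁^(q-1) := by
            rw [show lam*q*m₁^(q-1) = q*(lam*m₁^(q-1)) by ring, id2']
            ring
        _ ≤ lam*q*(g ξ/ξ^p)^(q-1) := h5
    have hShalf : 1/2 < q/(2*q-1) := by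
      rw [lt_div_iff₀ h2q]; linarith
    -- Y ≤ Cc - η
    have hY : f ξ/ξ^γ ≤ Cc - η := by
      rw [div_le_iff₀ hξγ]
      exact hfY
    have hβY : β*(f ξ/ξ^γ) ≤ β*(Cc - η) := mul_le_mul_of_nonneg_left hY hβ.le
    have hwnn : 0 ≤ w ξ/ξ^γ := le_of_lt (div_pos (hwpos ξ hξpos.le) hξγ)
    -- show Z ≥ cstar
    have hZge : cstar ≤ g ξ/ξ^p := by
      by_contra hcon
      push_neg at hcon
      -- (S - 1/2)(cstar - Z) ≤ -βη/2 < 0, contradiction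
      have hd : 0 < cstar - g ξ/ξ^p := by linarith
      have hprod : (q/(2*q-1) - 1/2) * (cstar - g ξ/ξ^p)
          ≤ (lam*q*(g ξ/ξ^p)^(q-1) - 1/2) * (cstar - g ξ/ξ^p) :=
        mul_le_mul_of_nonneg_right (by linarith) hd.le
      have hprodpos : 0 < (q/(2*q-1) - 1/2) * (cstar - g ξ/ξ^p) :=
        mul_pos (by linarith) hd
      have hβη : 0 < β*η := mul_pos hβ hη
      -- from h2, htan2, hPc, hβY, hεb :
      linarith only [hprod, hprodpos, h2, htan2, hPc, hβY, hεb, hβη]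
    have hγY : γ*(f ξ/ξ^γ) ≤ γ*(Cc - η) :=
      mul_le_mul_of_nonneg_left hY (by linarith)
    have : γ*Cc = cstar := hγCc
    linarith
  -- bounds for the rescaled profile
  have hylb : ∀ ξ : ℝ, a₂ ≤ ξ → -1 ≤ f ξ/ξ^γ := by
    intro ξ hξ
    have hξpos : 0 < ξ := lt_of_lt_of_le ha₂pos hξ
    have hξ1 : (1:ℝ) ≤ ξ := le_trans ha₂1 hξ
    have hξγ : (0:ℝ) < ξ^γ := Real.rpow_pos_of_pos hξpos γ
    have hγ1ξ : (1:ℝ) ≤ ξ^γ := by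
      calc (1:ℝ) = (1:ℝ)^γ := (Real.one_rpow γ).symm
        _ ≤ ξ^γ := Real.rpow_le_rpow (by norm_num) hξ1 (by linarith)
    rw [le_div_iff₀ hξγ]
    have := hflb ξ hξpos.le
    linarith
  have hyub : ∀ ξ : ℝ, a₂ ≤ ξ → f ξ/ξ^γ ≤ M₁ := by
    intro ξ hξ
    have hξpos : 0 < ξ := lt_of_lt_of_le ha₂pos hξ
    have hξγ : (0:ℝ) < ξ^γ := Real.rpow_pos_of_pos hξpos γ
    have hξp : (0:ℝ) < ξ^p := Real.rpow_pos_of_pos hξpos p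
    rw [div_le_iff₀ hξγ]
    have h1 := hfub ξ hξpos
    have h2 := hup ξ hξ
    have h3 : ξ * g ξ ≤ ξ * (M₁ * ξ^p) := mul_le_mul_of_nonneg_left h2 hξpos.le
    have e : M₁ * ξ^γ = ξ * (M₁ * ξ^p) := by rw [eγξ ξ hξpos]; ring
    linarith
  -- ε-threshold for w ξ / ξ^γ
  have hεth : ∀ ε : ℝ, 0 < ε → ∀ ξ : ℝ, max a₂ (W/ε) ≤ ξ → w ξ/ξ^γ ≤ ε := by
    intro ε hε ξ hξ
    have hξa : a₂ ≤ ξ := le_trans (le_max_left _ _) hξ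
    have hξW : W/ε ≤ ξ := le_trans (le_max_right _ _) hξ
    have hξpos : 0 < ξ := lt_of_lt_of_le ha₂pos hξa
    have hξ1 : (1:ℝ) ≤ ξ := le_trans ha₂1 hξa
    have hξγ : (0:ℝ) < ξ^γ := Real.rpow_pos_of_pos hξpos γ
    have h1 : ξ ≤ ξ^γ := by
      calc ξ = ξ^(1:ℝ) := (Real.rpow_one ξ).symm
        _ ≤ ξ^γ := Real.rpow_le_rpow_of_exponent_le hξ1 (by linarith)
    have h2 : w ξ ≤ W := hwbd ξ hξa
    have h3 : w ξ/ξ^γ ≤ W/ξ^γ := (div_le_div_iff_of_pos_right hξγ).mpr h2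
    have h4 : W/ξ^γ ≤ W/ξ := div_le_div_of_nonneg_left hWpos.le hξpos h1
    have h5 : W/ξ ≤ ε := by
      rw [div_le_iff₀ hξpos]
      rw [div_le_iff₀ hε] at hξW
      linarith
    linarith
  -- main convergence estimate
  have hmain : ∀ η : ℝ, 0 < η → ∃ b, a₂ ≤ b ∧ ∀ ξ, b ≤ ξ → |f ξ/ξ^γ - Cc| ≤ η := by
    intro η hη
    have hρ : 0 < γ*η := mul_pos (by linarith) hη
    have hUder : ∀ ξ ∈ Ici a₂, Cc + η ≤ f ξ/ξ^γ →
        (g ξ/ξ^p - γ*(f ξ/ξ^γ))/ξ ≤ -((γ*η)/ξ) := by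
      intro ξ hξ hY
      have hξpos : 0 < ξ := lt_of_lt_of_le ha₂pos hξ
      have hξγ : (0:ℝ) < ξ^γ := Real.rpow_pos_of_pos hξpos γ
      have hfY : (Cc + η) * ξ^γ ≤ f ξ := by
        rw [le_div_iff₀ hξγ] at hY; exact hY
      have h := hUPpt η hη ξ hξ hfY
      rw [← neg_div]
      exact (div_le_div_iff_of_pos_right hξpos).mpr h
    obtain ⟨b₁, hb₁a, hb₁⟩ := kpz_escape (u := fun ζ => f ζ/ζ^γ)
      (u' := fun ξ => (g ξ/ξ^p - γ*(f ξ/ξ^γ))/ξ) (a := a₂) (K := Cc + η) (Kl := -1)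
      (ρ := γ*η) ha₂pos hρ
      (fun ξ hξ => hYd ξ (lt_of_lt_of_le ha₂pos hξ))
      (fun ξ hξ => hylb ξ hξ)
      (fun ξ hξ hK => hUder ξ hξ hK)
    have hb₁pos : 0 < b₁ := lt_of_lt_of_le ha₂pos hb₁a
    have hUstay := kpz_stay_below (u := fun ζ => f ζ/ζ^γ)
      (u' := fun ξ => (g ξ/ξ^p - γ*(f ξ/ξ^γ))/ξ) (a := b₁) (K := Cc + η)
      (fun ξ hξ => hYd ξ (lt_of_lt_of_le hb₁pos hξ))
      hb₁.le
      (fun ξ hξ hK => by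
        have hξa : ξ ∈ Ici a₂ := le_trans hb₁a hξ
        have hξpos : 0 < ξ := lt_of_lt_of_le ha₂pos hξa
        have h := hUder ξ hξa (le_of_eq hK.symm)
        have hρξ : 0 < (γ*η)/ξ := div_pos hρ hξpos
        have h' : (g ξ/ξ^p - γ*(f ξ/ξ^γ))/ξ ≤ -((γ*η)/ξ) := h
        show (g ξ/ξ^p - γ*(f ξ/ξ^γ))/ξ < 0
        linarith)
    set aD := max b₁ (max a₂ (W/(β*η/2))) with haDdef
    have haDb₁ : b₁ ≤ aD := le_max_left _ _
    have haDa₂ : a₂ ≤ aD := le_trans (le_max_left _ _) (le_max_right _ _)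
    have haDpos : 0 < aD := lt_of_lt_of_le ha₂pos haDa₂
    have hβη2 : 0 < β*η/2 := by
      have := mul_pos hβ hη; linarith
    have hεb : ∀ ξ, aD ≤ ξ → w ξ/ξ^γ ≤ β*η/2 := by
      intro ξ hξ
      exact hεth (β*η/2) hβη2 ξ (le_trans (le_max_right _ _) hξ)
    have hDder : ∀ ξ ∈ Ici aD, f ξ/ξ^γ ≤ Cc - η →
        ((γ*η)/ξ) ≤ (g ξ/ξ^p - γ*(f ξ/ξ^γ))/ξ := by
      intro ξ hξ hY
      have hξa : a₂ ≤ ξ := le_trans haDa₂ hξ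
      have hξpos : 0 < ξ := lt_of_lt_of_le ha₂pos hξa
      have hξγ : (0:ℝ) < ξ^γ := Real.rpow_pos_of_pos hξpos γ
      have hfY : f ξ ≤ (Cc - η) * ξ^γ := by
        rw [div_le_iff₀ hξγ] at hY; exact hY
      have h := hDOWNpt η hη ξ hξa (hεb ξ hξ) hfY
      exact (div_le_div_iff_of_pos_right hξpos).mpr h
    obtain ⟨b₂, hb₂aD, hb₂⟩ := kpz_escape' (u := fun ζ => f ζ/ζ^γ)
      (u' := fun ξ => (g ξ/ξ^p - γ*(f ξ/ξ^γ))/ξ) (a := aD) (K := Cc - η) (Ku := M₁)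
      (ρ := γ*η) haDpos hρ
      (fun ξ hξ => hYd ξ (lt_of_lt_of_le haDpos hξ))
      (fun ξ hξ => hyub ξ (le_trans haDa₂ hξ))
      (fun ξ hξ hK => hDder ξ hξ hK)
    have hb₂pos : 0 < b₂ := lt_of_lt_of_le haDpos hb₂aD
    have hDstay := kpz_stay_above (u := fun ζ => f ζ/ζ^γ)
      (u' := fun ξ => (g ξ/ξ^p - γ*(f ξ/ξ^γ))/ξ) (a := b₂) (K := Cc - η)
      (fun ξ hξ => hYd ξ (lt_of_lt_of_le hb₂pos hξ))
      hb₂.le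
      (fun ξ hξ hK => by
        have hξaD : ξ ∈ Ici aD := le_trans hb₂aD hξ
        have hξpos : 0 < ξ := lt_of_lt_of_le haDpos hξaD
        have h : ((γ*η)/ξ) ≤ (g ξ/ξ^p - γ*(f ξ/ξ^γ))/ξ := hDder ξ hξaD (le_of_eq hK)
        have hρξ : 0 < (γ*η)/ξ := div_pos hρ hξpos
        show 0 < (g ξ/ξ^p - γ*(f ξ/ξ^γ))/ξ
        linarith)
    refine ⟨b₂, le_trans haDa₂ hb₂aD, ?_⟩
    intro ξ hξ
    have h1 : f ξ/ξ^γ ≤ Cc + η := hUstay ξ (le_trans (le_trans haDb₁ hb₂aD) hξ)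
    have h2 : Cc - η ≤ f ξ/ξ^γ := hDstay ξ hξ
    rw [abs_le]
    exact ⟨by linarith, by linarith⟩
  -- conclusion
  rw [hconst, Metric.tendsto_atTop]
  intro ε hε
  obtain ⟨b, hba, hb⟩ := hmain (ε/2) (by linarith)
  refine ⟨b, fun ξ hξ => ?_⟩
  rw [Real.dist_eq]
  have h := hb ξ hξ
  calc |f ξ/ξ^γ - Cc| ≤ ε/2 := h
    _ < ε := by linarith

set_option maxHeartbeats 1000000 in
theorem kpz_selfsimilar_asymptotics (q lam : ℝ) (hq : 2 < q) (hlam : 0 < lam)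
    (f : ℝ → ℝ)
    (hsol : SolvesKPZProfile q lam (Set.Ici 0) f)
    (hf0 : f 0 = -1)
    (hf'0 : derivWithin f (Set.Ici 0) 0 = 0) :
    Tendsto (fun ξ : ℝ => f ξ / ξ ^ (q / (q - 1))) atTop
      (𝓝 ((1 / (lam * (q - 1)) * ((q - 1) / q) ^ q) ^ (1 / (q - 1)))) := by
  obtain ⟨hreg, heq⟩ := hsol
  have hus : UniqueDiffOn ℝ (Set.Ici (0:ℝ)) := uniqueDiffOn_Ici 0
  set g : ℝ → ℝ := derivWithin f (Set.Ici 0) with hgdef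
  set w : ℝ → ℝ := derivWithin g (Set.Ici 0) with hwdef
  have hg1 : ContDiffOn ℝ 1 g (Set.Ici 0) := hreg.derivWithin hus (by norm_num)
  have hfdiff : DifferentiableOn ℝ f (Set.Ici 0) := hreg.differentiableOn (by norm_num)
  have hgdiff : DifferentiableOn ℝ g (Set.Ici 0) := hg1.differentiableOn one_ne_zero
  have hfc : ContinuousOn f (Set.Ici 0) := hreg.continuousOn
  have hgc : ContinuousOn g (Set.Ici 0) := hg1.continuousOn
  have hwc : ContinuousOn w (Set.Ici 0) := hg1.continuousOn_derivWithin hus (le_refl 1)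
  have hfd : ∀ ξ : ℝ, 0 < ξ → HasDerivAt f (g ξ) ξ := by
    intro ξ hξ
    exact ((hfdiff ξ (le_of_lt hξ)).hasDerivWithinAt).hasDerivAt (Ici_mem_nhds hξ)
  have hgd : ∀ ξ : ℝ, 0 < ξ → HasDerivAt g (w ξ) ξ := by
    intro ξ hξ
    exact ((hgdiff ξ (le_of_lt hξ)).hasDerivWithinAt).hasDerivAt (Ici_mem_nhds hξ)
  have hode : ∀ ξ : ℝ, 0 ≤ ξ →
      w ξ = -(lam * |g ξ| ^ q) + 1/2 * ξ * g ξ - (q-2)/(2*(q-1)) * f ξ := by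
    intro ξ hξ
    have h := heq ξ hξ
    linarith
  exact kpz_main q lam hq hlam f g w hfc hgc hwc hfd hgd hode hf0 hf'0
end

section
/- Let q > 2, λ > 0, and let f be a twice continuously differentiable solution of the ODE f''(ξ) + λ|f'(ξ)|^q − (1/2)ξ f'(ξ) + ((q−2)/(2(q−1))) f(ξ) = 0 on an interval [0, ξ̄) (with 0 < ξ̄ ≤ ∞), satisfying f(0) = −1 and f'(0) = 0. Then f'(ξ) > 0 and f''(ξ) > 0 for every ξ ∈ (0, ξ̄). -/
open Set Filter Topology Real

/-- The interval `[0, ξb)` of real numbers, where the right endpoint `ξb` is an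
extended real number (so `ξb = ⊤` gives `[0, ∞)`). -/
def KPZDomain (ξb : EReal) : Set ℝ := {ξ : ℝ | 0 ≤ ξ ∧ (ξ : EReal) < ξb}

theorem kpz_profile_derivs_pos (q lam : ℝ) (hq : 2 < q) (hlam : 0 < lam)
    (ξb : EReal) (hξb : 0 < ξb)
    (f : ℝ → ℝ)
    (hsol : SolvesKPZProfile q lam (KPZDomain ξb) f)
    (hf0 : f 0 = -1)
    (hf'0 : derivWithin f (KPZDomain ξb) 0 = 0) :
    ∀ ξ : ℝ, 0 < ξ → (ξ : EReal) < ξb →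
      0 < derivWithin f (KPZDomain ξb) ξ ∧
      0 < derivWithin (derivWithin f (KPZDomain ξb)) (KPZDomain ξb) ξ := by
  obtain ⟨hC2, hODE⟩ := hsol
  set s := KPZDomain ξb with hs
  set g := derivWithin f s with hgdef
  set w := derivWithin g s with hwdef
  set c := (q - 2) / (2 * (q - 1)) with hcdef
  have hq1 : (0:ℝ) < q - 1 := by linarith
  have hc_pos : 0 < c := by
    apply div_pos (by linarith) (by linarith)
  have hc_lt : c < 1 / 2 := by
    rw [hcdef, div_lt_div_iff₀ (by linarith) (by norm_num)]
    linarith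
  -- basic set facts
  have h0s : (0:ℝ) ∈ s := ⟨le_rfl, by exact_mod_cast hξb⟩
  have hsub : ∀ a ∈ s, Icc (0:ℝ) a ⊆ s := by
    intro a ha t ht
    exact ⟨ht.1, lt_of_le_of_lt (EReal.coe_le_coe_iff.mpr ht.2) ha.2⟩
  have hIoo_sub : ∀ a ∈ s, Ioo (0:ℝ) a ⊆ s := by
    intro a ha t ht
    exact hsub a ha ⟨ht.1.le, ht.2.le⟩
  have hIoo_int : ∀ a ∈ s, Ioo (0:ℝ) a ⊆ interior s := by
    intro a ha
    exact interior_maximal (hIoo_sub a ha) isOpen_Ioo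
  have hconv : Convex ℝ s := by
    rw [convex_iff_ordConnected]
    constructor
    intro x hx y hy z hz
    exact ⟨le_trans hx.1 hz.1, lt_of_le_of_lt (EReal.coe_le_coe_iff.mpr hz.2) hy.2⟩
  have hUD : UniqueDiffOn ℝ s := by
    apply uniqueDiffOn_convex hconv
    obtain ⟨c', hc0, hc1⟩ := exists_between hξb
    have hc'top : c' ≠ ⊤ := (lt_of_lt_of_le hc1 le_top).ne
    have hc'bot : c' ≠ ⊥ := (lt_trans (by norm_num) hc0).ne'
    set r := c'.toReal with hr
    have hrc : (r : EReal) = c' := EReal.coe_toReal hc'top hc'bot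
    have hrpos : 0 < r := by
      have : (0:EReal) < (r:EReal) := by rw [hrc]; exact hc0
      exact_mod_cast this
    have hrs : r ∈ s := ⟨hrpos.le, by rw [hrc]; exact hc1⟩
    exact ⟨r / 2, hIoo_int r hrs ⟨by linarith, by linarith⟩⟩
  -- differentiability facts
  have hf_diff : DifferentiableOn ℝ f s := hC2.differentiableOn (by norm_num)
  have hg_C1 : ContDiffOn ℝ 1 g s := hC2.derivWithin hUD (by norm_num)
  have hg_diff : DifferentiableOn ℝ g s := hg_C1.differentiableOn (by norm_num)
  have hg_cont : ContinuousOn g s := hg_diff.continuousOn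
  have hw_cont : ContinuousOn w s :=
    ((hg_C1.derivWithin (m := 0) hUD (by norm_num)).continuousOn)
  have hfg : ∀ ξ ∈ s, HasDerivWithinAt f (g ξ) s ξ := fun ξ h =>
    (hf_diff ξ h).hasDerivWithinAt
  have hgw : ∀ ξ ∈ s, HasDerivWithinAt g (w ξ) s ξ := fun ξ h =>
    (hg_diff ξ h).hasDerivWithinAt
  -- the ODE, rearranged
  have hEq : ∀ ξ ∈ s, w ξ = 1 / 2 * ξ * g ξ - lam * |g ξ| ^ q - c * f ξ := by
    intro ξ hξ
    have := hODE ξ hξ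
    linarith
  have hg0 : g 0 = 0 := hf'0
  have hw0c : w 0 = c := by
    have := hEq 0 h0s
    rw [hg0, hf0] at this
    simp only [abs_zero] at this
    rw [Real.zero_rpow (by positivity : q ≠ 0)] at this
    rw [this]; ring
  -- positivity of g from positivity of w below a point
  have gpos_aux : ∀ a ∈ s, 0 < a → (∀ t, 0 < t → t < a → 0 < w t) → 0 < g a := by
    intro a has ha hwt
    have hIcc : Icc (0:ℝ) a ⊆ s := hsub a has
    have hmono : StrictMonoOn g (Icc 0 a) := by
      apply strictMonoOn_of_deriv_pos (convex_Icc 0 a) (hg_cont.mono hIcc)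
      intro x hx
      rw [interior_Icc] at hx
      have hxint : x ∈ interior s := hIoo_int a has hx
      have hxs : x ∈ s := interior_subset hxint
      have hd : HasDerivAt g (w x) x :=
        (hgw x hxs).hasDerivAt (mem_interior_iff_mem_nhds.mp hxint)
      rw [hd.deriv]
      exact hwt x hx.1 hx.2
    have := hmono (left_mem_Icc.mpr ha.le) (right_mem_Icc.mpr ha.le) ha
    rwa [hg0] at this
  -- main claim: w > 0 on s
  have key : ∀ ξ ∈ s, 0 < w ξ := by
    by_contra hcon
    push_neg at hcon
    obtain ⟨ξ₁, hξ₁s, hξ₁⟩ := hcon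
    set T := {t : ℝ | t ∈ s ∧ w t ≤ 0} with hT
    have hmem₁ : ξ₁ ∈ T := ⟨hξ₁s, hξ₁⟩
    have hTne : T.Nonempty := ⟨ξ₁, hmem₁⟩
    have hTbdd : BddBelow T := ⟨0, fun t ht => ht.1.1⟩
    set ξ₀ := sInf T with hξ₀def
    have hξ₀le : ξ₀ ≤ ξ₁ := csInf_le hTbdd hmem₁
    have hξ₀nonneg : 0 ≤ ξ₀ := le_csInf hTne (fun t ht => ht.1.1)
    have hξ₀s : ξ₀ ∈ s :=
      ⟨hξ₀nonneg, lt_of_le_of_lt (EReal.coe_le_coe_iff.mpr hξ₀le) hξ₁s.2⟩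
    have hlt : ∀ t, 0 ≤ t → t < ξ₀ → 0 < w t := by
      intro t ht0 htlt
      by_contra h'
      push_neg at h'
      have hts : t ∈ s := hsub ξ₀ hξ₀s ⟨ht0, htlt.le⟩
      exact absurd (csInf_le hTbdd ⟨hts, h'⟩) (not_le.mpr htlt)
    have hw0le : w ξ₀ ≤ 0 := by
      by_contra hpos
      push_neg at hpos
      have hev : ∀ᶠ t in 𝓝[s] ξ₀, 0 < w t :=
        (hw_cont ξ₀ hξ₀s).eventually (eventually_gt_nhds hpos)
      rw [eventually_iff, Metric.mem_nhdsWithin_iff] at hev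
      obtain ⟨δ, hδ, hball⟩ := hev
      have hlb : ξ₀ + δ / 2 ≤ ξ₀ := by
        apply le_csInf hTne
        intro t ht
        by_contra hlt'
        push_neg at hlt'
        have htge : ξ₀ ≤ t := csInf_le hTbdd ht
        have : dist t ξ₀ < δ := by
          rw [Real.dist_eq, abs_of_nonneg (by linarith)]
          linarith
        exact absurd (hball ⟨Metric.mem_ball.mpr this, ht.1⟩) (not_lt.mpr ht.2)
      linarith
    have hξ₀pos : 0 < ξ₀ := by
      rcases eq_or_lt_of_le hξ₀nonneg with h | h
      · exfalso; rw [← h, hw0c] at hw0le; linarith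
      · exact h
    have hw0ge : 0 ≤ w ξ₀ := by
      have htend : Tendsto w (𝓝[Ioo 0 ξ₀] ξ₀) (𝓝 (w ξ₀)) :=
        (hw_cont ξ₀ hξ₀s).mono_left (nhdsWithin_mono _ (hIoo_sub ξ₀ hξ₀s))
      rw [nhdsWithin_Ioo_eq_nhdsLT hξ₀pos] at htend
      have hevIio : ∀ᶠ t in 𝓝[<] ξ₀, 0 ≤ w t := by
        rw [← nhdsWithin_Ioo_eq_nhdsLT hξ₀pos]
        filter_upwards [self_mem_nhdsWithin] with t ht
        exact (hlt t ht.1.le ht.2).le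
      exact ge_of_tendsto htend hevIio
    have hw0 : w ξ₀ = 0 := le_antisymm hw0le hw0ge
    have hgpos : 0 < g ξ₀ := gpos_aux ξ₀ hξ₀s hξ₀pos (fun t ht => hlt t ht.le)
    -- derivative of w at ξ₀
    have hφ : HasDerivAt (fun t : ℝ => |t| ^ q) (q * g ξ₀ ^ (q - 1)) (g ξ₀) := by
      have h1 : HasDerivAt (fun t : ℝ => t ^ q) (q * g ξ₀ ^ (q - 1)) (g ξ₀) :=
        Real.hasDerivAt_rpow_const (Or.inl hgpos.ne')
      apply h1.congr_of_eventuallyEq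
      filter_upwards [Ioi_mem_nhds hgpos] with t ht
      rw [abs_of_pos ht]
    have hcomp : HasDerivWithinAt (fun ξ => |g ξ| ^ q)
        ((q * g ξ₀ ^ (q - 1)) * w ξ₀) s ξ₀ := by
      have := hφ.comp_hasDerivWithinAt ξ₀ (hgw ξ₀ hξ₀s)
      simpa [Function.comp_def] using this
    have ht1 : HasDerivWithinAt (fun ξ => 1 / 2 * ξ * g ξ)
        (1 / 2 * g ξ₀ + 1 / 2 * ξ₀ * w ξ₀) s ξ₀ := by
      have ha : HasDerivWithinAt (fun ξ : ℝ => 1 / 2 * ξ) (1 / 2) s ξ₀ := by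
        simpa using ((hasDerivAt_id ξ₀).const_mul (1/2 : ℝ)).hasDerivWithinAt
      have := ha.mul (hgw ξ₀ hξ₀s)
      exact this
    have ht2 : HasDerivWithinAt (fun ξ => lam * |g ξ| ^ q)
        (lam * ((q * g ξ₀ ^ (q - 1)) * w ξ₀)) s ξ₀ := hcomp.const_mul lam
    have ht3 : HasDerivWithinAt (fun ξ => c * f ξ) (c * g ξ₀) s ξ₀ :=
      (hfg ξ₀ hξ₀s).const_mul c
    have hRHS := (ht1.sub ht2).sub ht3
    have hW : HasDerivWithinAt w
        ((1 / 2 * g ξ₀ + 1 / 2 * ξ₀ * w ξ₀ - lam * ((q * g ξ₀ ^ (q - 1)) * w ξ₀))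
          - c * g ξ₀) s ξ₀ :=
      hRHS.congr hEq (hEq ξ₀ hξ₀s)
    set L := (1 / 2 * g ξ₀ + 1 / 2 * ξ₀ * w ξ₀ - lam * ((q * g ξ₀ ^ (q - 1)) * w ξ₀))
          - c * g ξ₀ with hLdef
    have hLval : L = (1 / 2 - c) * g ξ₀ := by rw [hLdef, hw0]; ring
    have hLpos : 0 < L := by
      rw [hLval]
      exact mul_pos (by linarith) hgpos
    -- slope argument: L ≤ 0, contradiction
    have hslope : Tendsto (slope w ξ₀) (𝓝[s \ {ξ₀}] ξ₀) (𝓝 L) :=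
      hasDerivWithinAt_iff_tendsto_slope.mp hW
    have hsub' : Ioo (0:ℝ) ξ₀ ⊆ s \ {ξ₀} := by
      intro t ht
      exact ⟨hIoo_sub ξ₀ hξ₀s ht, by simp [ht.2.ne]⟩
    have htend2 : Tendsto (slope w ξ₀) (𝓝[Ioo 0 ξ₀] ξ₀) (𝓝 L) :=
      hslope.mono_left (nhdsWithin_mono _ hsub')
    rw [nhdsWithin_Ioo_eq_nhdsLT hξ₀pos] at htend2
    have hev2 : ∀ᶠ t in 𝓝[<] ξ₀, slope w ξ₀ t ≤ 0 := by
      rw [← nhdsWithin_Ioo_eq_nhdsLT hξ₀pos]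
      filter_upwards [self_mem_nhdsWithin] with t ht
      rw [slope_def_field]
      have h1 : 0 ≤ w t := (hlt t ht.1.le ht.2).le
      have h2 : t - ξ₀ < 0 := by linarith [ht.2]
      rw [hw0, sub_zero]
      exact div_nonpos_of_nonneg_of_nonpos h1 h2.le
    have : L ≤ 0 := le_of_tendsto htend2 hev2
    linarith
  -- conclude
  intro ξ hξpos hξlt
  have hξs : ξ ∈ s := ⟨hξpos.le, hξlt⟩
  refine ⟨?_, key ξ hξs⟩
  apply gpos_aux ξ hξs hξpos
  intro t ht0 hta
  exact key t (hsub ξ hξs ⟨ht0.le, hta.le⟩)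
end

section
/- Let q > 2, λ > 0, and let f : [0,∞) → ℝ be a twice continuously differentiable solution of the ODE f''(ξ) + λ|f'(ξ)|^q − (1/2)ξ f'(ξ) + ((q−2)/(2(q−1))) f(ξ) = 0 on [0,∞) with f(0) = −1 and f'(0) = 0. Then there exists ξ₀ > 0 such that f'(ξ) < (ξ/(2λ))^{1/(q−1)} for all ξ ≥ ξ₀. -/
open Set Filter Topology Real

/-- If `F` has positive derivative at `x`, then `F x < F y` for `y` slightly to the right. -/
lemma kpz_aux_slope_pos {F : ℝ → ℝ} {x D : ℝ} (hF : HasDerivAt F D x) (hD : 0 < D) :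
    ∀ᶠ y in 𝓝[>] x, F x < F y := by
  have h : Tendsto (slope F x) (𝓝[>] x) (𝓝 D) :=
    (hasDerivAt_iff_tendsto_slope.1 hF).mono_left
      (nhdsWithin_mono _ fun y (hy : x < y) => (mem_compl_singleton_iff).2 hy.ne')
  filter_upwards [h.eventually (eventually_gt_nhds hD), self_mem_nhdsWithin] with y hy hy'
  have hxy : (0:ℝ) < y - x := sub_pos.2 hy'
  have h2 := mul_pos hy hxy
  rw [slope_def_field, div_mul_cancel₀ _ hxy.ne'] at h2
  linarith

/-- If `F` has negative derivative at `x`, then `F y < F x` for `y` slightly to the right. -/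
lemma kpz_aux_slope_neg {F : ℝ → ℝ} {x D : ℝ} (hF : HasDerivAt F D x) (hD : D < 0) :
    ∀ᶠ y in 𝓝[>] x, F y < F x := by
  have h : Tendsto (slope F x) (𝓝[>] x) (𝓝 D) :=
    (hasDerivAt_iff_tendsto_slope.1 hF).mono_left
      (nhdsWithin_mono _ fun y (hy : x < y) => (mem_compl_singleton_iff).2 hy.ne')
  filter_upwards [h.eventually (eventually_lt_nhds hD), self_mem_nhdsWithin] with y hy hy'
  have hxy : (0:ℝ) < y - x := sub_pos.2 hy'
  have h2 := mul_neg_of_neg_of_pos hy hxy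
  rw [slope_def_field, div_mul_cancel₀ _ hxy.ne'] at h2
  linarith

lemma kpz_aux_abs_rpow (q : ℝ) (y : ℝ) : |y| ^ q = (y ^ 2) ^ (q / 2) := by
  have h1 : |y| ^ (2:ℝ) = y ^ 2 := by
    rw [show ((2:ℝ)) = ((2:ℕ):ℝ) by norm_num, Real.rpow_natCast, sq_abs]
  rw [← h1, ← Real.rpow_mul (abs_nonneg y)]
  congr 1
  ring

theorem kpz_profile_deriv_upper_bound (q lam : ℝ) (hq : 2 < q) (hlam : 0 < lam)
    (f : ℝ → ℝ)
    (hsol : SolvesKPZProfile q lam (Set.Ici 0) f)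
    (hf0 : f 0 = -1)
    (hf'0 : derivWithin f (Set.Ici 0) 0 = 0) :
    ∃ ξ₀ : ℝ, 0 < ξ₀ ∧ ∀ ξ : ℝ, ξ₀ ≤ ξ →
      derivWithin f (Set.Ici 0) ξ < (ξ / (2 * lam)) ^ (1 / (q - 1)) := by
  obtain ⟨hf2, hode⟩ := hsol
  set s : Set ℝ := Set.Ici 0 with hs_def
  set c : ℝ := (q - 2) / (2 * (q - 1)) with hc_def
  set p : ℝ → ℝ := derivWithin f s with hp_def
  set P : ℝ → ℝ := derivWithin p s with hP_def
  have hq1 : (0:ℝ) < q - 1 := by linarith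
  have hq2 : (0:ℝ) < q - 2 := by linarith
  have hc_pos : 0 < c := div_pos hq2 (by linarith)
  have hc_half : c < 1/2 := by
    rw [hc_def, div_lt_div_iff₀ (by linarith) (by norm_num)]
    linarith
  have hβ : 0 < 1/2 - c := by linarith
  have hsud : UniqueDiffOn ℝ s := uniqueDiffOn_Ici 0
  have hf_cont : ContinuousOn f s := hf2.continuousOn
  have hf_diff : DifferentiableOn ℝ f s := hf2.differentiableOn (by norm_num)
  have hp_cd : ContDiffOn ℝ 1 p s := hf2.derivWithin hsud (by norm_num)
  have hp_cont : ContinuousOn p s := hp_cd.continuousOn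
  have hp_diff : DifferentiableOn ℝ p s := hp_cd.differentiableOn (by norm_num)
  have hmem : ∀ {ξ : ℝ}, 0 < ξ → s ∈ 𝓝 ξ := fun hξ => Ici_mem_nhds hξ
  have hfd : ∀ {ξ : ℝ}, 0 < ξ → HasDerivAt f (p ξ) ξ := by
    intro ξ hξ
    have h := (hf_diff.differentiableAt (hmem hξ)).hasDerivAt
    rwa [← derivWithin_of_mem_nhds (hmem hξ)] at h
  have hpd : ∀ {ξ : ℝ}, 0 < ξ → HasDerivAt p (P ξ) ξ := by
    intro ξ hξ
    have h := (hp_diff.differentiableAt (hmem hξ)).hasDerivAt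
    rwa [← derivWithin_of_mem_nhds (hmem hξ)] at h
  have hodeP : ∀ ξ ∈ s, P ξ = -(lam * ((p ξ) ^ 2) ^ (q/2)) + 1/2 * ξ * p ξ - c * f ξ := by
    intro ξ hξ
    have h := hode ξ hξ
    rw [kpz_aux_abs_rpow q (p ξ)] at h
    linarith
  -- Key: at an interior critical point of p, the second derivative is (1/2 - c) * p ζ.
  have key : ∀ {ζ : ℝ}, 0 < ζ → P ζ = 0 → HasDerivAt P ((1/2 - c) * p ζ) ζ := by
    intro ζ hζ hPζ
    have hfd' : HasDerivAt f (p ζ) ζ := hfd hζ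
    have hpd' : HasDerivAt p 0 ζ := by
      have := hpd hζ; rwa [hPζ] at this
    have hsq : HasDerivAt (fun ξ => (p ξ) ^ 2) 0 ζ := by
      have := hpd'.pow 2
      simp at this ⊢; exact this
    have hout : HasDerivAt (fun t : ℝ => t ^ (q/2)) ((q/2) * ((p ζ)^2) ^ (q/2 - 1)) ((p ζ)^2) :=
      Real.hasDerivAt_rpow_const (Or.inr (by linarith))
    have hcomp : HasDerivAt (fun ξ => ((p ξ) ^ 2) ^ (q/2)) 0 ζ := by
      have := hout.comp ζ hsq
      simp [Function.comp] at this ⊢; exact this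
    have h1 : HasDerivAt (fun ξ : ℝ => 1/2 * ξ) (1/2) ζ := by
      simpa using (hasDerivAt_id ζ).const_mul (1/2 : ℝ)
    have hmul : HasDerivAt (fun ξ => 1/2 * ξ * p ξ) (1/2 * p ζ) ζ := by
      have := h1.mul hpd'
      simp at this ⊢; exact this
    have hR : HasDerivAt (fun ξ => -(lam * ((p ξ) ^ 2) ^ (q/2)) + 1/2 * ξ * p ξ - c * f ξ)
        ((1/2 - c) * p ζ) ζ := by
      have h2 := ((hcomp.const_mul lam).neg.add hmul).sub (hfd'.const_mul c)
      exact h2.congr_deriv (by ring)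
    exact hR.congr_of_eventuallyEq
      (eventuallyEq_of_mem (hmem hζ) (fun ξ hξ => hodeP ξ hξ))
  -- No interior strictly negative minimum of p on a compact interval in [0, ∞).
  have min_contra : ∀ {A B ζ : ℝ}, 0 ≤ A → A < ζ → ζ < B →
      IsMinOn p (Set.Icc A B) ζ → p ζ < 0 → False := by
    intro A B ζ hA hAζ hζB hmin hneg
    have hζ : 0 < ζ := lt_of_le_of_lt hA hAζ
    have hP0 : P ζ = 0 := by
      rw [hP_def, derivWithin_of_mem_nhds (hmem hζ)]
      exact (hmin.isLocalMin (Icc_mem_nhds hAζ hζB)).deriv_eq_zero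
    have hkey := key hζ hP0
    have hDneg : (1/2 - c) * p ζ < 0 := mul_neg_of_pos_of_neg hβ hneg
    have hev : ∀ᶠ y in 𝓝[>] ζ, P y < 0 := by
      filter_upwards [kpz_aux_slope_neg hkey hDneg] with y hy
      rw [hP0] at hy; exact hy
    rw [eventually_iff, mem_nhdsGT_iff_exists_Ioo_subset] at hev
    obtain ⟨u, hu, hsub⟩ := hev
    have hu' : ζ < u := hu
    set t : ℝ := min u B with ht_def
    have hζt : ζ < t := lt_min hu' hζB
    set mid : ℝ := (ζ + t)/2 with hmid_def
    have hmid1 : ζ < mid := by rw [hmid_def]; linarith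
    have hmid2 : mid < t := by rw [hmid_def]; linarith
    have hanti : StrictAntiOn p (Set.Icc ζ mid) := by
      apply strictAntiOn_of_deriv_neg (convex_Icc _ _)
      · exact hp_cont.mono (fun x hx => le_trans hζ.le hx.1)
      · intro x hx
        rw [interior_Icc] at hx
        have hx1 : ζ < x := hx.1
        have hxu : x < u := lt_of_lt_of_le (lt_trans hx.2 hmid2) (min_le_left _ _)
        have hPx : P x < 0 := hsub ⟨hx1, hxu⟩
        rwa [← derivWithin_of_mem_nhds (hmem (hζ.trans hx1))]
    have hlt : p mid < p ζ :=
      hanti (left_mem_Icc.2 hmid1.le) ⟨hmid1.le, le_rfl⟩ hmid1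
    have hmidmem : mid ∈ Set.Icc A B :=
      ⟨le_trans hAζ.le hmid1.le, le_trans hmid2.le (min_le_right _ _)⟩
    exact absurd (hmin hmidmem) (not_le.2 hlt)
  -- No interior strictly positive maximum of p on a compact interval in [0, ∞).
  have max_contra : ∀ {A B ζ : ℝ}, 0 ≤ A → A < ζ → ζ < B →
      IsMaxOn p (Set.Icc A B) ζ → 0 < p ζ → False := by
    intro A B ζ hA hAζ hζB hmax hpos
    have hζ : 0 < ζ := lt_of_le_of_lt hA hAζ
    have hP0 : P ζ = 0 := by
      rw [hP_def, derivWithin_of_mem_nhds (hmem hζ)]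
      exact (hmax.isLocalMax (Icc_mem_nhds hAζ hζB)).deriv_eq_zero
    have hkey := key hζ hP0
    have hDpos : 0 < (1/2 - c) * p ζ := mul_pos hβ hpos
    have hev : ∀ᶠ y in 𝓝[>] ζ, 0 < P y := by
      filter_upwards [kpz_aux_slope_pos hkey hDpos] with y hy
      rw [hP0] at hy; exact hy
    rw [eventually_iff, mem_nhdsGT_iff_exists_Ioo_subset] at hev
    obtain ⟨u, hu, hsub⟩ := hev
    have hu' : ζ < u := hu
    set t : ℝ := min u B with ht_def
    have hζt : ζ < t := lt_min hu' hζB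
    set mid : ℝ := (ζ + t)/2 with hmid_def
    have hmid1 : ζ < mid := by rw [hmid_def]; linarith
    have hmid2 : mid < t := by rw [hmid_def]; linarith
    have hmono : StrictMonoOn p (Set.Icc ζ mid) := by
      apply strictMonoOn_of_deriv_pos (convex_Icc _ _)
      · exact hp_cont.mono (fun x hx => le_trans hζ.le hx.1)
      · intro x hx
        rw [interior_Icc] at hx
        have hx1 : ζ < x := hx.1
        have hxu : x < u := lt_of_lt_of_le (lt_trans hx.2 hmid2) (min_le_left _ _)
        have hPx : 0 < P x := hsub ⟨hx1, hxu⟩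
        rwa [← derivWithin_of_mem_nhds (hmem (hζ.trans hx1))]
    have hlt : p ζ < p mid :=
      hmono (left_mem_Icc.2 hmid1.le) ⟨hmid1.le, le_rfl⟩ hmid1
    have hmidmem : mid ∈ Set.Icc A B :=
      ⟨le_trans hAζ.le hmid1.le, le_trans hmid2.le (min_le_right _ _)⟩
    exact absurd (hmax hmidmem) (not_le.2 hlt)
  by_cases hcase : ∃ b, 0 < b ∧ p b < 0
  · -- Case A: p is negative somewhere, hence negative forever after.
    obtain ⟨b, hb_pos, hb_neg⟩ := hcase
    refine ⟨b, hb_pos, fun ξ hξ => ?_⟩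
    have hξpos : 0 < ξ := lt_of_lt_of_le hb_pos hξ
    have hpξ : p ξ < 0 := by
      rcases eq_or_lt_of_le hξ with rfl | hlt
      · exact hb_neg
      · by_contra hcon
        push_neg at hcon
        obtain ⟨ζ, hζmem, hζmin⟩ := (isCompact_Icc (a := (0:ℝ)) (b := ξ)).exists_isMinOn
          (nonempty_Icc.2 hξpos.le) (hp_cont.mono Icc_subset_Ici_self)
        have hζb : p ζ ≤ p b := hζmin ⟨hb_pos.le, hlt.le⟩
        have hζneg : p ζ < 0 := lt_of_le_of_lt hζb hb_neg
        have hζ0 : 0 < ζ := by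
          rcases eq_or_lt_of_le hζmem.1 with h0 | h0
          · exfalso; rw [← h0, hf'0] at hζneg; exact lt_irrefl 0 hζneg
          · exact h0
        have hζξ : ζ < ξ := by
          rcases eq_or_lt_of_le hζmem.2 with h0 | h0
          · exfalso; rw [h0] at hζneg; exact absurd hcon (not_le.2 hζneg)
          · exact h0
        exact min_contra le_rfl hζ0 hζξ hζmin hζneg
    calc p ξ < 0 := hpξ
    _ < (ξ / (2 * lam)) ^ (1 / (q - 1)) :=
        Real.rpow_pos_of_pos (div_pos hξpos (by linarith)) _
  · -- Case B: p ≥ 0 everywhere on (0, ∞).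
    push_neg at hcase
    by_contra hgoal
    push_neg at hgoal
    -- p is monotone nondecreasing on (0, ∞)
    have mono : ∀ {x y : ℝ}, 0 < x → x ≤ y → p x ≤ p y := by
      intro x y hx hxy
      by_contra hcon
      push_neg at hcon
      have hy0 : 0 < y := lt_of_lt_of_le hx hxy
      obtain ⟨ζ, hζmem, hζmax⟩ := (isCompact_Icc (a := (0:ℝ)) (b := y)).exists_isMaxOn
        (nonempty_Icc.2 hy0.le) (hp_cont.mono Icc_subset_Ici_self)
      have hζx : p x ≤ p ζ := hζmax ⟨hx.le, hxy⟩
      have hpy : 0 ≤ p y := hcase y hy0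
      have hpx : 0 < p x := lt_of_le_of_lt hpy hcon
      have hζpos : 0 < p ζ := lt_of_lt_of_le hpx hζx
      have hζ0 : 0 < ζ := by
        rcases eq_or_lt_of_le hζmem.1 with h0 | h0
        · exfalso; rw [← h0, hf'0] at hζpos; exact lt_irrefl 0 hζpos
        · exact h0
      have hζy : ζ < y := by
        rcases eq_or_lt_of_le hζmem.2 with h0 | h0
        · exfalso; rw [h0] at hζx; exact absurd (lt_of_lt_of_le hcon hζx) (lt_irrefl _)
        · exact h0
      exact max_contra le_rfl hζ0 hζy hζmax hζpos
    obtain ⟨ξs, hξs1, hξs2⟩ := hgoal 1 one_pos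
    have hξs_pos : 0 < ξs := lt_of_lt_of_le one_pos hξs1
    set m : ℝ := (ξs/(2*lam)) ^ (1/(q-1)) with hm_def
    have hm_pos : 0 < m := Real.rpow_pos_of_pos (div_pos hξs_pos (by linarith)) _
    have hpm : m ≤ p ξs := hξs2
    -- f is nondecreasing on [0, ∞)
    have hf_mono : MonotoneOn f s := by
      apply monotoneOn_of_deriv_nonneg (convex_Ici 0) hf_cont
      · rw [interior_Ici]
        exact fun x hx => ((hf_diff.differentiableAt (hmem hx)).differentiableWithinAt)
      · rw [interior_Ici]
        intro x hx
        rw [← derivWithin_of_mem_nhds (hmem hx)]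
        exact hcase x hx
    -- linear growth of f beyond ξs
    have hgrow : ∀ ξ, ξs ≤ ξ → f ξs + m * (ξ - ξs) ≤ f ξ := by
      intro ξ hξ
      have hmono2 : MonotoneOn (fun t => f t - m * t) (Set.Ici ξs) := by
        apply monotoneOn_of_deriv_nonneg (convex_Ici ξs)
        · exact ((hf_cont.mono (Ici_subset_Ici.2 hξs_pos.le)).sub
            (continuous_const.mul continuous_id).continuousOn)
        · rw [interior_Ici]
          intro x hx
          have hx0 : 0 < x := lt_trans hξs_pos hx
          exact (((hf_diff.differentiableAt (hmem hx0)).sub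
            ((differentiable_id.const_mul m) x)).differentiableWithinAt)
        · rw [interior_Ici]
          intro x hx
          have hx0 : 0 < x := lt_trans hξs_pos hx
          have hder : HasDerivAt (fun t => f t - m * t) (p x - m) x := by
            have := (hfd hx0).sub ((hasDerivAt_id x).const_mul m)
            simp at this ⊢; exact this
          rw [hder.deriv]
          have : p ξs ≤ p x := mono hξs_pos hx.le
          linarith
      have h2 := hmono2 self_mem_Ici (mem_Ici.2 hξ) hξ
      simp only [] at h2
      linarith
    obtain ⟨ξ₃, hξ₃1, hξ₃2⟩ := hgoal (ξs + 1/m + 1) (by positivity)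
    have h1m : 0 < 1/m := by positivity
    have hξ₃s : ξs ≤ ξ₃ := by linarith
    have hξ₃pos : 0 < ξ₃ := lt_of_lt_of_le hξs_pos hξ₃s
    have hf3 : 0 < f ξ₃ := by
      have h1 := hgrow ξ₃ hξ₃s
      have h2 : f 0 ≤ f ξs := hf_mono (le_refl (0:ℝ)) hξs_pos.le hξs_pos.le
      rw [hf0] at h2
      have h3 : 1/m + 1 ≤ ξ₃ - ξs := by linarith
      have h4 : m * (1/m + 1) ≤ m * (ξ₃ - ξs) := by
        apply mul_le_mul_of_nonneg_left h3 hm_pos.le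
      have h5 : m * (1/m) = 1 := by field_simp
      nlinarith
    have hp3 : (ξ₃/(2*lam)) ^ (1/(q-1)) ≤ p ξ₃ := hξ₃2
    have hg3_pos : 0 < (ξ₃/(2*lam)) ^ (1/(q-1)) :=
      Real.rpow_pos_of_pos (div_pos hξ₃pos (by linarith)) _
    have hp3_pos : 0 < p ξ₃ := lt_of_lt_of_le hg3_pos hp3
    have hpow : ξ₃/2 ≤ lam * p ξ₃ ^ (q-1) := by
      have h1 : ξ₃/(2*lam) ≤ p ξ₃ ^ (q-1) := by
        have h2 := Real.rpow_le_rpow hg3_pos.le hp3 (by linarith : (0:ℝ) ≤ q - 1)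
        rwa [← Real.rpow_mul (div_nonneg hξ₃pos.le (by linarith)), one_div,
          inv_mul_cancel₀ hq1.ne', Real.rpow_one] at h2
      calc ξ₃/2 = lam * (ξ₃/(2*lam)) := by field_simp
      _ ≤ lam * p ξ₃ ^ (q-1) := mul_le_mul_of_nonneg_left h1 hlam.le
    have hPneg : P ξ₃ < 0 := by
      have hode3 := hode ξ₃ (mem_Ici.2 hξ₃pos.le)
      have habs3 : |p ξ₃| ^ q = p ξ₃ ^ (q-1) * p ξ₃ := by
        rw [abs_of_pos hp3_pos, show q = (q-1) + 1 by ring,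
          Real.rpow_add_one hp3_pos.ne']
        ring_nf
      rw [habs3] at hode3
      have hineq : 1/2 * ξ₃ * p ξ₃ ≤ lam * (p ξ₃ ^ (q-1) * p ξ₃) := by
        calc 1/2 * ξ₃ * p ξ₃ = (ξ₃/2) * p ξ₃ := by ring
        _ ≤ (lam * p ξ₃ ^ (q-1)) * p ξ₃ := mul_le_mul_of_nonneg_right hpow hp3_pos.le
        _ = lam * (p ξ₃ ^ (q-1) * p ξ₃) := by ring
      have hcf : 0 < c * f ξ₃ := mul_pos hc_pos hf3
      linarith
    have hd := hpd hξ₃pos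
    obtain ⟨y, hy1, hy2⟩ := ((kpz_aux_slope_neg hd hPneg).and self_mem_nhdsWithin).exists
    exact absurd (mono hξ₃pos (le_of_lt hy2)) (not_le.2 hy1)
end

section
/- Let q > 2, λ > 0, and let f be a twice continuously differentiable solution of the ODE f''(ξ) + λ|f'(ξ)|^q − (1/2)ξ f'(ξ) + ((q−2)/(2(q−1))) f(ξ) = 0 with f(0) = −1 and f'(0) = 0, defined on its maximal interval of existence [0, ξ̄). Then ξ̄ = ∞; that is, the solution of this initial value problem exists globally on [0,∞). -/
open Set Filter Topology Real

noncomputable section KPZAux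

/-- smooth version of `fun y => |y| ^ q` -/
def kN (q : ℝ) : ℝ → ℝ := fun y => (y ^ 2) ^ (q / 2)

lemma kN_abs {q : ℝ} (y : ℝ) : |y| ^ q = kN q y := by
  unfold kN
  rw [← sq_abs, ← Real.rpow_natCast |y| 2, ← Real.rpow_mul (abs_nonneg y)]
  ring_nf

lemma kN_nonneg {q : ℝ} (y : ℝ) : 0 ≤ kN q y := Real.rpow_nonneg (sq_nonneg y) _

lemma kN_zero {q : ℝ} (hq : 2 < q) : kN q 0 = 0 := by
  unfold kN
  norm_num
  exact Real.zero_rpow (by positivity)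

lemma kN_contDiff {q : ℝ} (hq : 2 < q) : ContDiff ℝ 1 (kN q) := by
  have h1 : ((1:ℕ):ℝ) ≤ q / 2 := by push_cast; linarith
  exact (Real.contDiff_rpow_const_of_le h1).comp (contDiff_id.pow 2)

lemma kN_continuous {q : ℝ} (hq : 2 < q) : Continuous (kN q) :=
  (kN_contDiff hq).continuous

lemma kN_hasDerivAt {q : ℝ} (hq : 2 < q) (y : ℝ) :
    HasDerivAt (kN q) (deriv (kN q) y) y :=
  (((kN_contDiff hq).differentiable one_ne_zero) y).hasDerivAt

/-- the autonomous vector field for the system (t, f, f') -/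
def kV (q lam c : ℝ) : ℝ × ℝ × ℝ → ℝ × ℝ × ℝ :=
  fun z => (1, z.2.2, z.1 / 2 * z.2.2 - lam * kN q z.2.2 - c * z.2.1)

lemma kV_contDiff {q : ℝ} (lam c : ℝ) (hq : 2 < q) : ContDiff ℝ 1 (kV q lam c) := by
  unfold kV
  refine contDiff_const.prodMk (ContDiff.prodMk ?_ ?_)
  · exact contDiff_snd.comp contDiff_snd
  · refine ContDiff.sub (ContDiff.sub ?_ ?_) ?_
    · exact (contDiff_fst.div_const 2).mul (contDiff_snd.comp contDiff_snd)
    · exact contDiff_const.mul ((kN_contDiff hq).comp (contDiff_snd.comp contDiff_snd))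
    · exact contDiff_const.mul (contDiff_fst.comp contDiff_snd)

lemma kV_lipschitzOn {q : ℝ} (lam c : ℝ) (hq : 2 < q) (R : ℝ) :
    ∃ K : NNReal, LipschitzOnWith K (kV q lam c) (Metric.closedBall 0 R) := by
  have hV := kV_contDiff lam c hq
  obtain ⟨M, hM⟩ := (isCompact_closedBall (0:ℝ×ℝ×ℝ) R).exists_bound_of_continuousOn
    ((hV.continuous_fderiv one_ne_zero).continuousOn (s := Metric.closedBall 0 R))
  refine ⟨⟨max M 0, le_max_right _ _⟩, ?_⟩
  apply Convex.lipschitzOnWith_of_nnnorm_fderiv_le (fun x _ => hV.differentiable one_ne_zero x) ?_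
    (convex_closedBall _ _)
  intro x hx
  exact NNReal.coe_le_coe.1 ((hM x hx).trans (le_max_left _ _))

lemma KPZcoe_Ico (r : ℝ) : {ξ : ℝ | 0 ≤ ξ ∧ (ξ : EReal) < (r : EReal)} = Ico 0 r := by
  ext x; simp [mem_Ico, EReal.coe_lt_coe_iff]

end KPZAux

set_option maxHeartbeats 2000000 in
theorem kpz_profile_global_existence (q lam : ℝ) (hq : 2 < q) (hlam : 0 < lam)
    (ξb : EReal) (hξb : 0 < ξb)
    (f : ℝ → ℝ)
    (hsol : SolvesKPZProfile q lam (KPZDomain ξb) f)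
    (hf0 : f 0 = -1)
    (hf'0 : derivWithin f (KPZDomain ξb) 0 = 0)
    (hmax : ∀ ξc : EReal, ξb < ξc →
      ¬ ∃ g : ℝ → ℝ, SolvesKPZProfile q lam (KPZDomain ξc) g ∧
          g 0 = -1 ∧ derivWithin g (KPZDomain ξc) 0 = 0 ∧
          ∀ x ∈ KPZDomain ξb, g x = f x) :
    ξb = ⊤ := by
  by_contra hne
  have hbot : ξb ≠ ⊥ := ne_bot_of_gt hξb
  set b := ξb.toReal with hbdef
  have hbeq : ξb = (b : EReal) := (EReal.coe_toReal hne hbot).symm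
  have hb0 : (0:ℝ) < b := by
    rw [hbeq] at hξb; exact_mod_cast hξb
  have hsdom : KPZDomain ξb = Ico 0 b := by
    rw [hbeq]; exact KPZcoe_Ico b
  rw [hsdom] at hsol hf'0
  set s : Set ℝ := Ico 0 b with hsdef
  obtain ⟨hreg, hodeq⟩ := hsol
  set cst : ℝ := (q - 2) / (2 * (q - 1)) with hcstdef
  have hq1 : (0:ℝ) < q - 1 := by linarith
  have hcst0 : 0 < cst := by
    rw [hcstdef]; exact div_pos (by linarith) (by linarith)
  have hcsthalf : cst < 1/2 := by
    rw [hcstdef, div_lt_div_iff₀ (by linarith) (by norm_num)]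
    linarith
  set v := derivWithin f s with hvdef
  set w := derivWithin v s with hwdef
  have husd : UniqueDiffOn ℝ s := uniqueDiffOn_Ico 0 b
  have hvcd : ContDiffOn ℝ 1 v s := hreg.derivWithin husd (by norm_num)
  have hvdiff : DifferentiableOn ℝ v s := hvcd.differentiableOn one_ne_zero
  have hfdiff : DifferentiableOn ℝ f s := hreg.differentiableOn (by norm_num)
  have hfc : ContinuousOn f s := hfdiff.continuousOn
  have hvc : ContinuousOn v s := hvdiff.continuousOn
  have hwc : ContinuousOn w s := hvcd.continuousOn_derivWithin husd le_rfl
  have h0s : (0:ℝ) ∈ s := ⟨le_rfl, hb0⟩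
  have hode : ∀ x ∈ s, w x = x/2 * v x - lam * kN q (v x) - cst * f x := by
    intro x hx
    have h := hodeq x hx
    rw [kN_abs] at h
    linear_combination h
  have hv0 : v 0 = 0 := hf'0
  have hw0 : w 0 = cst := by
    have := hode 0 h0s
    rw [hv0, hf0, kN_zero hq] at this
    simpa using this
  -- interior derivatives
  have hmemnhds : ∀ x ∈ Ioo 0 b, s ∈ 𝓝 x := fun x hx =>
    mem_of_superset (isOpen_Ioo.mem_nhds hx) Ioo_subset_Ico_self
  have hIooss : Ioo 0 b ⊆ s := Ioo_subset_Ico_self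
  have hfd : ∀ x ∈ Ioo 0 b, HasDerivAt f (v x) x := by
    intro x hx
    have h := (hfdiff x (hIooss hx)).differentiableAt (hmemnhds x hx)
    rw [hvdef, derivWithin_of_mem_nhds (hmemnhds x hx)]
    exact h.hasDerivAt
  have hvd : ∀ x ∈ Ioo 0 b, HasDerivAt v (w x) x := by
    intro x hx
    have h := (hvdiff x (hIooss hx)).differentiableAt (hmemnhds x hx)
    rw [hwdef, derivWithin_of_mem_nhds (hmemnhds x hx)]
    exact h.hasDerivAt
  have hwd : ∀ x ∈ Ioo 0 b, HasDerivAt w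
      ((1/2) * v x + x/2 * w x - lam * (deriv (kN q) (v x) * w x) - cst * v x) x := by
    intro x hx
    have h1 : HasDerivAt (fun y => y/2 * v y) ((1/2) * v x + x/2 * w x) x :=
      ((hasDerivAt_id x).div_const 2).mul (hvd x hx)
    have h2 : HasDerivAt (fun y => kN q (v y)) (deriv (kN q) (v x) * w x) x :=
      (kN_hasDerivAt hq (v x)).comp x (hvd x hx)
    have hrhs : HasDerivAt (fun y => y/2 * v y - lam * kN q (v y) - cst * f y)
        ((1/2) * v x + x/2 * w x - lam * (deriv (kN q) (v x) * w x) - cst * v x) x :=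
      (h1.sub (h2.const_mul lam)).sub ((hfd x hx).const_mul cst)
    exact hrhs.congr_of_eventuallyEq
      (eventually_of_mem (hmemnhds x hx) (fun y hy => hode y hy))
  -- invariance : w ≥ 0 on s
  have hwge : ∀ x ∈ s, 0 ≤ w x := by
    intro T hT
    by_contra hneg
    push_neg at hneg
    set B : Set ℝ := {x ∈ Icc 0 T | w x ≤ 0} with hBdef
    have hTs : Icc 0 T ⊆ s := fun x hx => ⟨hx.1, lt_of_le_of_lt hx.2 hT.2⟩
    have hBne : B.Nonempty := ⟨T, ⟨⟨hT.1, le_rfl⟩, hneg.le⟩⟩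
    have hBclosed : IsClosed B := by
      have hBeq : B = Icc 0 T ∩ w ⁻¹' (Iic 0) := by
        ext y; simp [hBdef, mem_sep_iff, and_comm]
      rw [hBeq]
      exact (hwc.mono hTs).preimage_isClosed_of_isClosed isClosed_Icc isClosed_Iic
    have hBbdd : BddBelow B := ⟨0, fun x hx => hx.1.1⟩
    set τ := sInf B with hτdef
    have hτB : τ ∈ B := IsClosed.csInf_mem hBclosed hBne hBbdd
    have hτIcc : τ ∈ Icc 0 T := hτB.1
    have hτs : τ ∈ s := hTs hτIcc
    have hτ0 : 0 < τ := by
      rcases eq_or_lt_of_le hτIcc.1 with h|h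
      · exfalso
        have h2 := hτB.2
        rw [← h, hw0] at h2
        linarith
      · exact h
    have hwpos' : ∀ x ∈ Ico 0 τ, 0 < w x := by
      intro x hx
      by_contra hnp
      push_neg at hnp
      have hxB : x ∈ B := ⟨⟨hx.1, le_trans hx.2.le hτIcc.2⟩, hnp⟩
      exact absurd (csInf_le hBbdd hxB) (not_le.2 hx.2)
    have hwτ : w τ = 0 := by
      refine le_antisymm hτB.2 ?_
      have hcw : ContinuousWithinAt w (Ico 0 τ) τ :=
        (hwc.continuousWithinAt hτs).mono (fun x hx => hTs ⟨hx.1, le_trans hx.2.le hτIcc.2⟩)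
      have hne' : (𝓝[Ico 0 τ] τ).NeBot := by
        apply mem_closure_iff_nhdsWithin_neBot.mp
        rw [closure_Ico hτ0.ne]
        exact ⟨hτ0.le, le_rfl⟩
      exact ge_of_tendsto hcw
        (eventually_of_mem self_mem_nhdsWithin (fun x hx => (hwpos' x hx).le))
    have hvsm : StrictMonoOn v (Icc 0 τ) := by
      apply strictMonoOn_of_deriv_pos (convex_Icc 0 τ)
        (hvc.mono (fun x hx => hTs ⟨hx.1, le_trans hx.2 hτIcc.2⟩))
      intro x hx
      rw [interior_Icc] at hx
      have hxI : x ∈ Ioo 0 b := ⟨hx.1, lt_of_lt_of_le hx.2 (le_trans hτIcc.2 hT.2.le)⟩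
      rw [(hvd x hxI).deriv]
      exact hwpos' x ⟨hx.1.le, hx.2⟩
    have hvτ : 0 < v τ := by
      have := hvsm ⟨le_rfl, hτ0.le⟩ ⟨hτ0.le, le_rfl⟩ hτ0
      rwa [hv0] at this
    have hτIoo : τ ∈ Ioo 0 b := ⟨hτ0, lt_of_le_of_lt hτIcc.2 hT.2⟩
    have hwdτ := hwd τ hτIoo
    rw [hwτ] at hwdτ
    have hval : (1/2) * v τ + τ/2 * 0 - lam * (deriv (kN q) (v τ) * 0) - cst * v τ
        = (1/2 - cst) * v τ := by ring
    rw [hval] at hwdτ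
    have h1 := hwdτ.hasDerivWithinAt (s := Iio τ)
    rw [hasDerivWithinAt_iff_tendsto_slope] at h1
    rw [Set.diff_singleton_eq_self (by simp : τ ∉ Iio τ)] at h1
    have hev : ∀ᶠ x in 𝓝[<] τ, slope w τ x ≤ 0 := by
      filter_upwards [Ioo_mem_nhdsLT hτ0] with x hx
      have hwx : 0 < w x := hwpos' x ⟨hx.1.le, hx.2⟩
      have hsl : slope w τ x = w x / (x - τ) := by
        rw [slope_def_field, hwτ, sub_zero]
      rw [hsl]
      exact div_nonpos_of_nonneg_of_nonpos hwx.le (by linarith [hx.2])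
    have hle : (1/2 - cst) * v τ ≤ 0 := le_of_tendsto h1 hev
    nlinarith
  have hvmono : MonotoneOn v s := by
    apply monotoneOn_of_deriv_nonneg (convex_Ico 0 b) hvc
    · rw [interior_Ico]
      exact fun x hx => ((hvd x hx).differentiableAt).differentiableWithinAt
    · rw [interior_Ico]
      intro x hx
      rw [(hvd x hx).deriv]
      exact hwge x (hIooss hx)
  have hvge : ∀ x ∈ s, 0 ≤ v x := fun x hx => hv0 ▸ hvmono h0s hx hx.1
  have hfmono : MonotoneOn f s := by
    apply monotoneOn_of_deriv_nonneg (convex_Ico 0 b) hfc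
    · rw [interior_Ico]
      exact fun x hx => ((hfd x hx).differentiableAt).differentiableWithinAt
    · rw [interior_Ico]
      intro x hx
      rw [(hfd x hx).deriv]
      exact hvge x (hIooss hx)
  have hfge : ∀ x ∈ s, -1 ≤ f x := fun x hx => hf0 ▸ hfmono h0s hx hx.1
  -- upper bounds
  set Mv : ℝ := cst * b * exp (b^2/4) with hMvdef
  have hMv0 : 0 ≤ Mv := by positivity
  have hvle : ∀ x ∈ s, v x ≤ Mv := by
    have hφd : ∀ y ∈ Ioo 0 b, HasDerivAt (fun t => v t * exp (-(t^2)/4) - cst * t)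
        (w y * exp (-(y^2)/4) + v y * (exp (-(y^2)/4) * (-(2*y)/4)) - cst) y := by
      intro y hy
      have h1 : HasDerivAt (fun t : ℝ => -(t^2)/4) (-(2*y)/4) y := by
        have := (hasDerivAt_pow 2 y).neg.div_const 4
        exact this.congr_deriv (by push_cast; ring)
      have hE : HasDerivAt (fun t => exp (-(t^2)/4)) (exp (-(y^2)/4) * (-(2*y)/4)) y := h1.exp
      have h3 : HasDerivAt (fun t : ℝ => cst * t) cst y := by
        simpa using (hasDerivAt_id y).const_mul cst
      exact ((hvd y hy).mul hE).sub h3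
    have hφanti : AntitoneOn (fun t => v t * exp (-(t^2)/4) - cst * t) s := by
      apply antitoneOn_of_deriv_nonpos (convex_Ico 0 b)
      · exact (hvc.mul (Real.continuous_exp.comp
          ((continuous_pow 2).neg.div_const 4)).continuousOn).sub
          ((continuous_const.mul continuous_id).continuousOn)
      · rw [interior_Ico]
        exact fun y hy => (hφd y hy).differentiableAt.differentiableWithinAt
      · rw [interior_Ico]
        intro y hy
        show deriv (fun t => v t * exp (-(t^2)/4) - cst * t) y ≤ 0
        rw [(hφd y hy).deriv]
        have hys : y ∈ s := hIooss hy
        have h := hode y hys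
        have hkN : 0 ≤ kN q (v y) := kN_nonneg (v y)
        have hE1 : exp (-(y^2)/4) ≤ 1 := by
          rw [Real.exp_le_one_iff]
          nlinarith [sq_nonneg y]
        have hEpos : (0:ℝ) < exp (-(y^2)/4) := exp_pos _
        have e1 : w y * exp (-(y^2)/4) + v y * (exp (-(y^2)/4) * (-(2*y)/4)) - cst
            = exp (-(y^2)/4) * (-(lam * kN q (v y)) - cst * f y) - cst := by
          rw [h]; ring
        have e2 : -(lam * kN q (v y)) - cst * f y ≤ cst := by
          nlinarith [hfge y hys, mul_nonneg hlam.le hkN]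
        have e3 : exp (-(y^2)/4) * (-(lam * kN q (v y)) - cst * f y)
            ≤ exp (-(y^2)/4) * cst := mul_le_mul_of_nonneg_left e2 hEpos.le
        have e4 : exp (-(y^2)/4) * cst ≤ cst := by
          nlinarith
        linarith
    intro x hx
    have hφle := hφanti h0s hx hx.1
    have hφ0 : v 0 * exp (-((0:ℝ)^2)/4) - cst * 0 = 0 := by
      rw [hv0]; ring
    have h1 : v x * exp (-(x^2)/4) ≤ cst * x := by linarith
    have hEE : exp (-(x^2)/4) * exp (x^2/4) = 1 := by
      rw [← Real.exp_add, show -(x^2)/4 + x^2/4 = 0 by ring, Real.exp_zero]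
    have h2 : v x ≤ cst * x * exp (x^2/4) := by
      calc v x = v x * (exp (-(x^2)/4) * exp (x^2/4)) := by rw [hEE, mul_one]
        _ = v x * exp (-(x^2)/4) * exp (x^2/4) := by ring
        _ ≤ cst * x * exp (x^2/4) :=
            mul_le_mul_of_nonneg_right h1 (Real.exp_pos (x^2/4)).le
    rw [hMvdef]
    calc v x ≤ cst * x * exp (x^2/4) := h2
      _ ≤ cst * b * exp (b^2/4) := by
          apply mul_le_mul (mul_le_mul_of_nonneg_left hx.2.le hcst0.le)
            (exp_le_exp.2 (by nlinarith [hx.1, hx.2])) (exp_pos _).le (by positivity)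
  have hfle : ∀ x ∈ s, f x ≤ -1 + Mv * b := by
    have hψanti : AntitoneOn (fun y => f y - Mv * y) s := by
      apply antitoneOn_of_deriv_nonpos (convex_Ico 0 b)
        (hfc.sub ((continuous_const.mul continuous_id).continuousOn))
      · rw [interior_Ico]
        intro y hy
        have hd : HasDerivAt (fun y => f y - Mv * y) (v y - Mv) y :=
          (hfd y hy).sub (by simpa using (hasDerivAt_id y).const_mul Mv)
        exact hd.differentiableAt.differentiableWithinAt
      · rw [interior_Ico]
        intro y hy
        have hd : HasDerivAt (fun y => f y - Mv * y) (v y - Mv) y :=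
          (hfd y hy).sub (by simpa using (hasDerivAt_id y).const_mul Mv)
        show deriv (fun y => f y - Mv * y) y ≤ 0
        rw [hd.deriv]
        linarith [hvle y (hIooss hy)]
    intro x hx
    have h1 := hψanti h0s hx hx.1
    simp only [mul_zero, sub_zero, hf0] at h1
    have hxb : Mv * x ≤ Mv * b := mul_le_mul_of_nonneg_left hx.2.le hMv0
    linarith
  -- limits at b
  have hIoone : (Ioo (0:ℝ) b).Nonempty := nonempty_Ioo.2 hb0
  set vb : ℝ := sSup (v '' Ioo 0 b) with hvbdef
  set fb : ℝ := sSup (f '' Ioo 0 b) with hfbdef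
  have hvtend : Tendsto v (𝓝[<] b) (𝓝 vb) :=
    MonotoneOn.tendsto_nhdsWithin_Ioo_left hIoone (hvmono.mono hIooss)
      ⟨Mv, by rintro y ⟨x, hx, rfl⟩; exact hvle x (hIooss hx)⟩
  have hftend : Tendsto f (𝓝[<] b) (𝓝 fb) :=
    MonotoneOn.tendsto_nhdsWithin_Ioo_left hIoone (hfmono.mono hIooss)
      ⟨-1 + Mv * b, by rintro y ⟨x, hx, rfl⟩; exact hfle x (hIooss hx)⟩
  set wb : ℝ := b/2 * vb - lam * kN q vb - cst * fb with hwbdef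
  have hwtend : Tendsto w (𝓝[<] b) (𝓝 wb) := by
    have hhalf : Tendsto (fun x : ℝ => x/2) (𝓝[<] b) (𝓝 (b/2)) :=
      ((continuous_id.div_const 2).tendsto b).mono_left nhdsWithin_le_nhds
    have hexpr : Tendsto (fun x => x/2 * v x - lam * kN q (v x) - cst * f x)
        (𝓝[<] b) (𝓝 wb) := by
      rw [hwbdef]
      exact ((hhalf.mul hvtend).sub
        (tendsto_const_nhds.mul (((kN_continuous hq).tendsto vb).comp hvtend))).sub
        (tendsto_const_nhds.mul hftend)
    apply hexpr.congr'
    filter_upwards [Ioo_mem_nhdsLT hb0] with x hx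
    exact (hode x (hIooss hx)).symm
  -- extended functions
  set F : ℝ → ℝ := fun x => if x < b then f x else fb with hFdef
  set Vb : ℝ → ℝ := fun x => if x < b then v x else vb with hVbdef
  have hFend : HasDerivWithinAt F vb (Iic b) b := by
    apply hasDerivWithinAt_Iic_of_tendsto_deriv (s := Ioo 0 b)
    · intro x hx
      have hd : HasDerivAt F (v x) x := (hfd x hx).congr_of_eventuallyEq
        (eventually_of_mem (Iio_mem_nhds hx.2) (fun y hy => if_pos hy))
      exact hd.differentiableAt.differentiableWithinAt
    · have hFb : F b = fb := by simp [hFdef]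
      rw [ContinuousWithinAt, hFb]
      apply Tendsto.mono_left ?_ (nhdsWithin_mono b Ioo_subset_Iio_self)
      apply hftend.congr'
      filter_upwards [self_mem_nhdsWithin] with x (hx : x < b)
      exact (if_pos hx).symm
    · exact Ioo_mem_nhdsLT hb0
    · apply hvtend.congr'
      filter_upwards [Ioo_mem_nhdsLT hb0] with x hx
      have hFf : F =ᶠ[𝓝 x] f := eventually_of_mem (Iio_mem_nhds hx.2) (fun y hy => if_pos hy)
      rw [hFf.deriv_eq, (hfd x hx).deriv]
  have hVend : HasDerivWithinAt Vb wb (Iic b) b := by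
    apply hasDerivWithinAt_Iic_of_tendsto_deriv (s := Ioo 0 b)
    · intro x hx
      have hd : HasDerivAt Vb (w x) x := (hvd x hx).congr_of_eventuallyEq
        (eventually_of_mem (Iio_mem_nhds hx.2) (fun y hy => if_pos hy))
      exact hd.differentiableAt.differentiableWithinAt
    · have hVbb : Vb b = vb := by simp [hVbdef]
      rw [ContinuousWithinAt, hVbb]
      apply Tendsto.mono_left ?_ (nhdsWithin_mono b Ioo_subset_Iio_self)
      apply hvtend.congr'
      filter_upwards [self_mem_nhdsWithin] with x (hx : x < b)
      exact (if_pos hx).symm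
    · exact Ioo_mem_nhdsLT hb0
    · apply hwtend.congr'
      filter_upwards [Ioo_mem_nhdsLT hb0] with x hx
      have hVf : Vb =ᶠ[𝓝 x] v := eventually_of_mem (Iio_mem_nhds hx.2) (fun y hy => if_pos hy)
      rw [hVf.deriv_eq, (hvd x hx).deriv]
  -- the curve
  set VF := kV q lam cst with hVFdef
  set Z : ℝ → ℝ × ℝ × ℝ := fun t => (t, F t, Vb t) with hZdef
  have hZb : Z b = (b, fb, vb) := by simp [hZdef, hFdef, hVbdef]
  have hZd_int : ∀ t ∈ Ioo 0 b, HasDerivAt Z (VF (Z t)) t := by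
    intro t ht
    have hFt : F t = f t := if_pos ht.2
    have hVbt : Vb t = v t := if_pos ht.2
    have hF : HasDerivAt F (v t) t := (hfd t ht).congr_of_eventuallyEq
      (eventually_of_mem (Iio_mem_nhds ht.2) (fun y hy => if_pos hy))
    have hV : HasDerivAt Vb (w t) t := (hvd t ht).congr_of_eventuallyEq
      (eventually_of_mem (Iio_mem_nhds ht.2) (fun y hy => if_pos hy))
    have h3 : VF (Z t) = (1, v t, w t) := by
      show ((1:ℝ), Vb t, t/2 * Vb t - lam * kN q (Vb t) - cst * F t) = (1, v t, w t)
      rw [hFt, hVbt, ← hode t (hIooss ht)]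
    rw [h3]
    exact (hasDerivAt_id t).prodMk (hF.prodMk hV)
  have hZdb : HasDerivWithinAt Z (VF (Z b)) (Iic b) b := by
    have h3 : VF (Z b) = (1, vb, wb) := by
      rw [hZb]
      show ((1:ℝ), vb, b/2 * vb - lam * kN q vb - cst * fb) = (1, vb, wb)
      rw [← hwbdef]
    rw [h3]
    exact (hasDerivAt_id b).hasDerivWithinAt.prodMk (hFend.prodMk hVend)
  -- Picard-Lindelöf
  obtain ⟨Y, hYb, ε, hε, hYd⟩ :=
    ContDiffAt.exists_forall_mem_closedBall_exists_eq_forall_mem_Ioo_hasDerivAt₀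
      ((kV_contDiff lam cst hq).contDiffAt (x := ((b:ℝ), fb, vb))) b
  set T : ℝ := max (b - ε/2) (b/2) with hTdef
  have hTb : T < b := by
    apply max_lt <;> linarith
  have hT0 : 0 < T := lt_of_lt_of_le (by linarith) (le_max_right _ _)
  have hTε : b - ε < T := lt_of_lt_of_le (by linarith) (le_max_left _ _)
  have hIccsub : Icc T b ⊆ Ioo (b - ε) (b + ε) := fun t ht =>
    ⟨lt_of_lt_of_le hTε ht.1, lt_of_le_of_lt ht.2 (by linarith)⟩
  -- uniqueness of solutions on [T, b]
  have huniq : EqOn Z Y (Icc T b) := by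
    have hZcont : ContinuousOn Z (Icc T b) := by
      intro t ht
      rcases eq_or_lt_of_le ht.2 with h|h
      · exact h ▸ (hZdb.continuousWithinAt.mono (fun y (hy : y ∈ Icc T b) => hy.2))
      · exact (hZd_int t ⟨lt_of_lt_of_le hT0 ht.1, h⟩).continuousAt.continuousWithinAt
    have hYcont : ContinuousOn Y (Icc T b) := fun t ht =>
      (hYd t (hIccsub ht)).continuousAt.continuousWithinAt
    obtain ⟨R1, hR1⟩ := (isCompact_Icc.image_of_continuousOn hZcont).isBounded.subset_closedBall 0
    obtain ⟨R2, hR2⟩ := (isCompact_Icc.image_of_continuousOn hYcont).isBounded.subset_closedBall 0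
    obtain ⟨K, hK⟩ := kV_lipschitzOn lam cst hq (max R1 R2)
    apply ODE_solution_unique_of_mem_Icc_left (v := fun _ : ℝ => VF)
      (s := fun _ => Metric.closedBall 0 (max R1 R2)) (K := K) (hv := fun _ _ => hK)
      hZcont ?_ ?_ hYcont ?_ ?_ (by rw [hZb, hYb])
    · intro t ht
      rcases eq_or_lt_of_le ht.2 with h|h
      · exact h ▸ hZdb
      · exact (hZd_int t ⟨lt_of_lt_of_le hT0 ht.1.le, h⟩).hasDerivWithinAt
    · intro t ht
      exact Metric.closedBall_subset_closedBall (le_max_left R1 R2)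
        (hR1 (mem_image_of_mem Z (Ioc_subset_Icc_self ht)))
    · intro t ht
      exact (hYd t (hIccsub (Ioc_subset_Icc_self ht))).hasDerivWithinAt
    · intro t ht
      exact Metric.closedBall_subset_closedBall (le_max_right R1 R2)
        (hR2 (mem_image_of_mem Y (Ioc_subset_Icc_self ht)))
  -- the glued extension
  set c' : ℝ := b + ε/2 with hc'def
  have hbc' : b < c' := by rw [hc'def]; linarith
  have hc'0 : (0:ℝ) < c' := by rw [hc'def]; linarith
  set U : Set ℝ := Ioo T (b + ε) with hUdef
  have hUopen : IsOpen U := isOpen_Ioo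
  have hUsub : U ⊆ Ioo (b - ε) (b + ε) := fun t ht => ⟨lt_trans hTε ht.1, ht.2⟩
  have hY1 : ∀ t ∈ U, (Y t).1 = t := by
    intro t ht
    have hder : ∀ u ∈ Ioo (b - ε) (b + ε), HasDerivAt (fun u => (Y u).1 - u) 0 u := by
      intro u hu
      have h1 : HasDerivAt (fun u => (Y u).1) ((VF (Y u)).1) u := (hYd u hu).fst
      have h2 : (VF (Y u)).1 = 1 := rfl
      rw [h2] at h1
      exact (h1.sub (hasDerivAt_id' u)).congr_deriv (sub_self 1)
    have hYb1 : (Y b).1 - b = 0 := by rw [hYb]; ring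
    rcases le_or_gt t b with hcase|hcase
    · have hsub2 : Icc t b ⊆ Ioo (b - ε) (b + ε) := fun y hy =>
        ⟨lt_of_lt_of_le (lt_trans hTε ht.1) hy.1, lt_of_le_of_lt hy.2 (by linarith)⟩
      have hconst := constant_of_has_deriv_right_zero
        (f := fun u => (Y u).1 - u) (a := t) (b := b)
        (fun y hy => (hder y (hsub2 hy)).continuousAt.continuousWithinAt)
        (fun y hy => (hder y (hsub2 (Ico_subset_Icc_self hy))).hasDerivWithinAt)
      have hb' := hconst b ⟨hcase, le_rfl⟩
      simp only [hYb1] at hb'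
      linarith [hb'.symm]
    · have hsub2 : Icc b t ⊆ Ioo (b - ε) (b + ε) := fun y hy =>
        ⟨by linarith [hy.1], lt_of_le_of_lt hy.2 ht.2⟩
      have hconst := constant_of_has_deriv_right_zero
        (f := fun u => (Y u).1 - u) (a := b) (b := t)
        (fun y hy => (hder y (hsub2 hy)).continuousAt.continuousWithinAt)
        (fun y hy => (hder y (hsub2 (Ico_subset_Icc_self hy))).hasDerivWithinAt)
      have ht' := hconst t ⟨hcase.le, le_rfl⟩
      simp only [hYb1] at ht'
      linarith [ht']
  set g : ℝ → ℝ := fun x => if x < b then f x else (Y x).2.1 with hgdef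
  set vg : ℝ → ℝ := fun x => if x < b then v x else (Y x).2.2 with hvgdef
  set wg : ℝ → ℝ := fun x => x/2 * vg x - lam * kN q (vg x) - cst * g x with hwgdef
  set s' : Set ℝ := Ico 0 c' with hs'def
  have hUc' : ∀ x ∈ s', ¬ x < b → x ∈ U := by
    intro x hx hnb
    refine ⟨lt_of_lt_of_le hTb (not_lt.1 hnb), ?_⟩
    have hx2 : x < c' := hx.2
    have hcb : c' ≤ b + ε := by rw [hc'def]; linarith
    exact lt_of_lt_of_le hx2 hcb
  have hgU : EqOn g (fun x => (Y x).2.1) U := by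
    intro x hxU
    by_cases hxb : x < b
    · have hZY := huniq ⟨hxU.1.le, hxb.le⟩
      calc g x = f x := if_pos hxb
        _ = F x := (if_pos hxb).symm
        _ = (Z x).2.1 := rfl
        _ = (Y x).2.1 := by rw [hZY]
    · exact if_neg hxb
  have hvgU : EqOn vg (fun x => (Y x).2.2) U := by
    intro x hxU
    by_cases hxb : x < b
    · have hZY := huniq ⟨hxU.1.le, hxb.le⟩
      calc vg x = v x := if_pos hxb
        _ = Vb x := (if_pos hxb).symm
        _ = (Z x).2.2 := rfl
        _ = (Y x).2.2 := by rw [hZY]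
    · exact if_neg hxb
  have hgYd : ∀ x ∈ U, HasDerivAt g (vg x) x ∧ HasDerivAt vg (wg x) x := by
    intro x hxU
    have hYdx := hYd x (hUsub hxU)
    have hgev : g =ᶠ[𝓝 x] (fun y => (Y y).2.1) :=
      eventually_of_mem (hUopen.mem_nhds hxU) (fun y hy => hgU hy)
    have hvgev : vg =ᶠ[𝓝 x] (fun y => (Y y).2.2) :=
      eventually_of_mem (hUopen.mem_nhds hxU) (fun y hy => hvgU hy)
    have h21 : HasDerivAt (fun y => (Y y).2.1) ((VF (Y x)).2.1) x := hYdx.snd.fst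
    have h22 : HasDerivAt (fun y => (Y y).2.2) ((VF (Y x)).2.2) x := hYdx.snd.snd
    constructor
    · have h := h21.congr_of_eventuallyEq hgev
      have hval : (VF (Y x)).2.1 = vg x := by
        show (Y x).2.2 = vg x
        exact (hvgU hxU).symm
      rwa [hval] at h
    · have h := h22.congr_of_eventuallyEq hvgev
      have hval : (VF (Y x)).2.2 = wg x := by
        show (Y x).1/2 * (Y x).2.2 - lam * kN q ((Y x).2.2) - cst * (Y x).2.1 = wg x
        rw [hY1 x hxU, show (Y x).2.2 = vg x from (hvgU hxU).symm,
          show (Y x).2.1 = g x from (hgU hxU).symm]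
      rwa [hval] at h
  have hss' : s =ᶠ[𝓝 (0:ℝ)] s' := by
    rw [Filter.eventuallyEq_set]
    filter_upwards [Iio_mem_nhds hb0] with y hy
    constructor
    · intro hys
      exact ⟨hys.1, lt_trans hy hbc'⟩
    · intro hys'
      exact ⟨hys'.1, hy⟩
  have hgfev : g =ᶠ[𝓝[s'] (0:ℝ)] f := by
    filter_upwards [mem_nhdsWithin_of_mem_nhds (Iio_mem_nhds hb0)] with y hy
    exact if_pos hy
  have hvgvev : vg =ᶠ[𝓝[s'] (0:ℝ)] v := by
    filter_upwards [mem_nhdsWithin_of_mem_nhds (Iio_mem_nhds hb0)] with y hy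
    exact if_pos hy
  have hgd : ∀ x ∈ s', HasDerivWithinAt g (vg x) s' x := by
    intro x hx
    by_cases hxb : x < b
    · rcases eq_or_lt_of_le hx.1 with h0|h0
      · have hx0 : x = 0 := h0.symm
        subst hx0
        have hds : HasDerivWithinAt f (v 0) s 0 := (hfdiff 0 h0s).hasDerivWithinAt
        have hds' : HasDerivWithinAt f (v 0) s' 0 := hds.congr_set hss'
        have h := hds'.congr_of_eventuallyEq hgfev (if_pos hb0)
        have hvg0 : vg 0 = v 0 := if_pos hb0
        rwa [hvg0]
      · have hxI : x ∈ Ioo 0 b := ⟨h0, hxb⟩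
        have hgf : g =ᶠ[𝓝 x] f := eventually_of_mem (Iio_mem_nhds hxb) (fun y hy => if_pos hy)
        have h := (hfd x hxI).congr_of_eventuallyEq hgf
        have hvgx : vg x = v x := if_pos hxb
        rw [hvgx]
        exact h.hasDerivWithinAt
    · exact ((hgYd x (hUc' x hx hxb)).1).hasDerivWithinAt
  have hvgd : ∀ x ∈ s', HasDerivWithinAt vg (wg x) s' x := by
    intro x hx
    by_cases hxb : x < b
    · have hxs : x ∈ s := ⟨hx.1, hxb⟩
      have hwgx : wg x = w x := by
        show x/2 * vg x - lam * kN q (vg x) - cst * g x = w x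
        rw [show vg x = v x from if_pos hxb, show g x = f x from if_pos hxb,
          hode x hxs]
      rcases eq_or_lt_of_le hx.1 with h0|h0
      · have hx0 : x = 0 := h0.symm
        subst hx0
        have hds : HasDerivWithinAt v (w 0) s 0 := (hvdiff 0 h0s).hasDerivWithinAt
        have hds' : HasDerivWithinAt v (w 0) s' 0 := hds.congr_set hss'
        have h := hds'.congr_of_eventuallyEq hvgvev (if_pos hb0)
        rwa [hwgx]
      · have hxI : x ∈ Ioo 0 b := ⟨h0, hxb⟩
        have hvgf : vg =ᶠ[𝓝 x] v := eventually_of_mem (Iio_mem_nhds hxb) (fun y hy => if_pos hy)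
        have h := (hvd x hxI).congr_of_eventuallyEq hvgf
        rw [hwgx]
        exact h.hasDerivWithinAt
    · exact ((hgYd x (hUc' x hx hxb)).2).hasDerivWithinAt
  have husd' : UniqueDiffOn ℝ s' := uniqueDiffOn_Ico 0 c'
  have hdW : ∀ x ∈ s', derivWithin g s' x = vg x := fun x hx =>
    (hgd x hx).derivWithin (husd' x hx)
  have hdW2 : ∀ x ∈ s', derivWithin vg s' x = wg x := fun x hx =>
    (hvgd x hx).derivWithin (husd' x hx)
  have hvgcont : ContinuousOn vg s' := fun x hx =>
    (hvgd x hx).differentiableWithinAt.continuousWithinAt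
  have hgcont : ContinuousOn g s' := fun x hx =>
    (hgd x hx).differentiableWithinAt.continuousWithinAt
  have hwgc : ContinuousOn wg s' := by
    show ContinuousOn (fun x => x/2 * vg x - lam * kN q (vg x) - cst * g x) s'
    apply ContinuousOn.sub (ContinuousOn.sub ?_ ?_) ?_
    · exact (continuous_id.div_const 2).continuousOn.mul hvgcont
    · exact continuous_const.continuousOn.mul ((kN_continuous hq).comp_continuousOn hvgcont)
    · exact continuous_const.continuousOn.mul hgcont
  have hgreg : ContDiffOn ℝ 2 g s' := by
    rw [(by norm_num : (2 : WithTop ℕ∞) = 1 + 1)]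
    apply (contDiffOn_succ_iff_derivWithin husd').2
    refine ⟨fun x hx => (hgd x hx).differentiableWithinAt, by simp, ?_⟩
    have hvgcd : ContDiffOn ℝ 1 vg s' := by
      rw [(by norm_num : (1 : WithTop ℕ∞) = 0 + 1)]
      apply (contDiffOn_succ_iff_derivWithin husd').2
      refine ⟨fun x hx => (hvgd x hx).differentiableWithinAt, by simp, ?_⟩
      rw [contDiffOn_zero]
      exact hwgc.congr (fun x hx => hdW2 x hx)
    exact hvgcd.congr (fun x hx => hdW x hx)
  -- contradiction with maximality
  have hblt : ξb < ((c' : ℝ) : EReal) := by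
    rw [hbeq]; exact_mod_cast hbc'
  apply hmax ((c' : ℝ) : EReal) hblt
  have hs'dom : KPZDomain ((c' : ℝ) : EReal) = s' := KPZcoe_Ico c'
  refine ⟨g, ?_, ?_, ?_, ?_⟩
  · rw [hs'dom]
    constructor
    · exact hgreg
    · intro ξ hξ
      rw [hdW ξ hξ, derivWithin_congr (fun x hx => hdW x hx) (hdW ξ hξ), hdW2 ξ hξ, kN_abs]
      have hwgx : wg ξ = ξ/2 * vg ξ - lam * kN q (vg ξ) - cst * g ξ := rfl
      rw [hwgx]
      ring
  · show g 0 = -1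
    rw [hgdef]
    simp only [if_pos hb0]
    exact hf0
  · rw [hs'dom]
    have h0s' : (0:ℝ) ∈ s' := ⟨le_rfl, hc'0⟩
    rw [hdW 0 h0s']
    rw [hvgdef]
    simp only [if_pos hb0]
    exact hv0
  · rw [hsdom]
    intro x hx
    rw [hgdef]
    simp only [if_pos hx.2]
end

section
/- Let q > 2, λ > 0, and let f : [0,∞) → ℝ be a twice continuously differentiable solution of the ODE f''(ξ) + λ|f'(ξ)|^q − (1/2)ξ f'(ξ) + ((q−2)/(2(q−1))) f(ξ) = 0 on [0,∞) with f(0) = −1 and f'(0) = 0. Then there exists a unique point ξ₀ ∈ (0,∞) such that f(ξ) < 0 for ξ ∈ [0, ξ₀) and f(ξ) > 0 for ξ ∈ (ξ₀, ∞). -/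
open Set Filter Topology Real

theorem kpz_profile_unique_zero (q lam : ℝ) (hq : 2 < q) (hlam : 0 < lam)
    (f : ℝ → ℝ)
    (hsol : SolvesKPZProfile q lam (Set.Ici 0) f)
    (hf0 : f 0 = -1)
    (hf'0 : derivWithin f (Set.Ici 0) 0 = 0) :
    ∃! ξ₀ : ℝ, 0 < ξ₀ ∧
      (∀ ξ : ℝ, 0 ≤ ξ → ξ < ξ₀ → f ξ < 0) ∧
      (∀ ξ : ℝ, ξ₀ < ξ → 0 < f ξ) := by
  obtain ⟨hreg, hode⟩ := hsol
  set s : Set ℝ := Set.Ici (0:ℝ) with hsdef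
  set c : ℝ := (q - 2) / (2 * (q - 1)) with hcdef
  have hq1 : (1:ℝ) < q := by linarith
  have hc : 0 < c := div_pos (by linarith) (by linarith)
  have hc2 : c < 1/2 := by
    rw [hcdef, div_lt_div_iff₀ (by linarith) (by norm_num)]; linarith
  set g : ℝ → ℝ := derivWithin f s with hgdef
  set h : ℝ → ℝ := derivWithin g s with hhdef
  have hus : UniqueDiffOn ℝ s := uniqueDiffOn_Ici 0
  have hg1 : ContDiffOn ℝ 1 g s := hreg.derivWithin hus (by norm_num)
  have hgc : ContinuousOn g s := hg1.continuousOn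
  have hfc : ContinuousOn f s := hreg.continuousOn
  have hhc : ContinuousOn h s := by
    have := hg1.derivWithin (m := 0) hus (by norm_num)
    exact this.continuousOn
  have hfd : ∀ ξ ∈ s, HasDerivWithinAt f (g ξ) s ξ := fun ξ hξ =>
    ((hreg.differentiableOn (by norm_num)) ξ hξ).hasDerivWithinAt
  have hgd : ∀ ξ ∈ s, HasDerivWithinAt g (h ξ) s ξ := fun ξ hξ =>
    ((hg1.differentiableOn one_ne_zero) ξ hξ).hasDerivWithinAt
  have hode' : ∀ ξ ∈ s, h ξ = 1/2 * ξ * g ξ - lam * |g ξ| ^ q - c * f ξ := by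
    intro ξ hξ
    have := hode ξ hξ
    linarith
  have hzero_mem : (0:ℝ) ∈ s := Set.self_mem_Ici
  have h0 : h 0 = c := by
    have := hode' 0 hzero_mem
    rw [hf'0, hf0] at this
    rw [this, abs_zero, Real.zero_rpow (by positivity)]
    ring
  -- Key claim: h > 0 on [0, ∞)
  have key : ∀ t, 0 ≤ t → 0 < h t := by
    by_contra hcon
    push_neg at hcon
    obtain ⟨t₀, ht₀0, ht₀⟩ := hcon
    set T : Set ℝ := s ∩ h ⁻¹' (Set.Iic 0) with hTdef
    have hTne : T.Nonempty := ⟨t₀, ht₀0, ht₀⟩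
    have hTbdd : BddBelow T := ⟨0, fun x hx => hx.1⟩
    have hTclosed : IsClosed T :=
      hhc.preimage_isClosed_of_isClosed isClosed_Ici isClosed_Iic
    set σ : ℝ := sInf T with hσdef
    have hσT : σ ∈ T := hTclosed.csInf_mem hTne hTbdd
    have hσ0 : (0:ℝ) ≤ σ := hσT.1
    have hσle : h σ ≤ 0 := hσT.2
    have hσmem : σ ∈ s := hσ0
    have hσpos : 0 < σ := by
      rcases eq_or_lt_of_le hσ0 with heq | hlt
      · exfalso; rw [← heq] at hσle; rw [h0] at hσle; linarith
      · exact hlt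
    have hbefore : ∀ t, 0 ≤ t → t < σ → 0 < h t := by
      intro t ht0 htσ
      by_contra hle
      push_neg at hle
      exact absurd (csInf_le hTbdd ⟨ht0, hle⟩) (not_le.mpr htσ)
    have hneBot : (𝓝[Set.Ico 0 σ] σ).NeBot := by
      rw [← mem_closure_iff_nhdsWithin_neBot, closure_Ico (ne_of_lt hσpos)]
      exact ⟨hσ0, le_refl σ⟩
    have hσ0' : 0 ≤ h σ := by
      have htend : Tendsto h (𝓝[Set.Ico 0 σ] σ) (𝓝 (h σ)) :=
        (hhc σ hσmem).mono (fun x hx => hx.1)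
      exact ge_of_tendsto htend
        (eventually_of_mem self_mem_nhdsWithin fun t ht => (hbefore t ht.1 ht.2).le)
    have hσz : h σ = 0 := le_antisymm hσle hσ0'
    -- g σ > 0
    have hgmono : StrictMonoOn g (Set.Icc 0 σ) := by
      apply strictMonoOn_of_deriv_pos (convex_Icc 0 σ)
        (hgc.mono (Set.Icc_subset_Ici_self))
      intro x hx
      rw [interior_Icc] at hx
      have hxs : x ∈ s := le_of_lt hx.1
      have hd : HasDerivAt g (h x) x := (hgd x hxs).hasDerivAt (Ici_mem_nhds hx.1)
      rw [hd.deriv]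
      exact hbefore x hx.1.le hx.2
    have hgσ : 0 < g σ := by
      have := hgmono (Set.left_mem_Icc.mpr hσ0) (Set.right_mem_Icc.mpr hσ0) hσpos
      rwa [hf'0] at this
    -- derivative of h at σ
    have hgσd : HasDerivWithinAt g (h σ) s σ := hgd σ hσmem
    have hev : ∀ᶠ ξ in 𝓝[s] σ, 0 < g ξ := (hgc σ hσmem) (isOpen_Ioi.mem_nhds hgσ)
    have houter : HasDerivAt (fun x : ℝ => x ^ q) (q * (g σ) ^ (q-1)) (g σ) :=
      Real.hasDerivAt_rpow_const (Or.inl (ne_of_gt hgσ))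
    have hcomp : HasDerivWithinAt (fun ξ => (g ξ) ^ q) (q * (g σ) ^ (q-1) * h σ) s σ :=
      houter.comp_hasDerivWithinAt σ hgσd
    have habs : HasDerivWithinAt (fun ξ => |g ξ| ^ q) (q * (g σ) ^ (q-1) * h σ) s σ := by
      apply hcomp.congr_of_eventuallyEq
      · filter_upwards [hev] with ξ hξ
        rw [abs_of_pos hξ]
      · rw [abs_of_pos hgσ]
    have hid : HasDerivWithinAt (fun ξ : ℝ => 1/2 * ξ) (1/2 * 1) s σ :=
      (hasDerivWithinAt_id σ s).const_mul (1/2)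
    have hφ : HasDerivWithinAt
        (fun ξ => 1/2 * ξ * g ξ - lam * |g ξ| ^ q - c * f ξ)
        ((1/2 * 1) * g σ + (1/2 * σ) * h σ - lam * (q * (g σ) ^ (q-1) * h σ)
          - c * g σ) s σ :=
      ((hid.mul hgσd).sub (habs.const_mul lam)).sub ((hfd σ hσmem).const_mul c)
    have hφ' : HasDerivWithinAt
        (fun ξ => 1/2 * ξ * g ξ - lam * |g ξ| ^ q - c * f ξ)
        ((1/2 - c) * g σ) s σ := by
      convert hφ using 1
      rw [hσz]; ring
    have hhd : HasDerivWithinAt h ((1/2 - c) * g σ) s σ :=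
      hφ'.congr hode' (hode' σ hσmem)
    -- slope contradiction
    have hslope := hasDerivWithinAt_iff_tendsto_slope.mp hhd
    have hlim : Tendsto (slope h σ) (𝓝[Set.Ico 0 σ] σ) (𝓝 ((1/2 - c) * g σ)) :=
      hslope.mono_left (nhdsWithin_mono σ (fun x hx => ⟨hx.1, ne_of_lt hx.2⟩))
    have hle0 : (1/2 - c) * g σ ≤ 0 := by
      apply le_of_tendsto hlim
      filter_upwards [self_mem_nhdsWithin] with t ht
      rw [slope_def_field, hσz, sub_zero]
      exact div_nonpos_of_nonneg_of_nonpos (hbefore t ht.1 ht.2).le (by linarith [ht.2])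
    nlinarith
  -- g > 0 on (0, ∞), f strictly increasing
  have hgs : StrictMonoOn g s := by
    apply strictMonoOn_of_deriv_pos (convex_Ici 0) hgc
    intro x hx
    rw [interior_Ici] at hx
    have hd : HasDerivAt g (h x) x := (hgd x (Set.mem_Ici.mpr (le_of_lt hx))).hasDerivAt (Ici_mem_nhds hx)
    rw [hd.deriv]
    exact key x hx.le
  have hgpos : ∀ t : ℝ, 0 < t → 0 < g t := by
    intro t ht
    have := hgs hzero_mem (le_of_lt ht) ht
    rwa [hf'0] at this
  have hfs : StrictMonoOn f s := by
    apply strictMonoOn_of_deriv_pos (convex_Ici 0) hfc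
    intro x hx
    rw [interior_Ici] at hx
    have hd : HasDerivAt f (g x) x := (hfd x (Set.mem_Ici.mpr (le_of_lt hx))).hasDerivAt (Ici_mem_nhds hx)
    rw [hd.deriv]
    exact hgpos x hx
  -- linear growth from ξ = 1
  have hg1pos : 0 < g 1 := hgpos 1 one_pos
  have hgrow : ∀ ξ : ℝ, 1 ≤ ξ → g 1 * (ξ - 1) ≤ f ξ - f 1 := by
    intro ξ hξ
    apply (convex_Ici 1).mul_sub_le_image_sub_of_le_deriv
      (hfc.mono (Set.Ici_subset_Ici.mpr zero_le_one))
    · intro x hx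
      rw [interior_Ici] at hx
      have hx0 : (0:ℝ) < x := lt_trans one_pos hx
      exact ((hfd x hx0.le).hasDerivAt (Ici_mem_nhds hx0)).differentiableAt.differentiableWithinAt
    · intro x hx
      rw [interior_Ici] at hx
      have hx0 : (0:ℝ) < x := lt_trans one_pos hx
      have hd : HasDerivAt f (g x) x := (hfd x hx0.le).hasDerivAt (Ici_mem_nhds hx0)
      rw [hd.deriv]
      exact (hgs.monotoneOn (Set.mem_Ici.mpr zero_le_one) hx0.le hx.le)
    · exact Set.self_mem_Ici
    · exact hξ
    · exact hξ
  set ξ₁ : ℝ := 1 + (1 + |f 1|) / g 1 with hξ₁def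
  have hξ₁gt1 : 1 < ξ₁ := by
    have h' : 0 < (1 + |f 1|) / g 1 := div_pos (by positivity) hg1pos
    rw [hξ₁def]; linarith
  have hfξ₁ : 1 ≤ f ξ₁ := by
    have h1 := hgrow ξ₁ hξ₁gt1.le
    have h2 : g 1 * (ξ₁ - 1) = 1 + |f 1| := by
      rw [hξ₁def]
      field_simp
      ring
    rw [h2] at h1
    have := neg_abs_le (f 1)
    linarith
  have hξ₁0 : (0:ℝ) ≤ ξ₁ := by linarith
  -- IVT
  have hIVT := intermediate_value_Icc hξ₁0 (hfc.mono (Set.Icc_subset_Ici_self))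
  have h0mem : (0:ℝ) ∈ Set.Icc (f 0) (f ξ₁) := by
    constructor
    · rw [hf0]; norm_num
    · linarith
  obtain ⟨ξ₀, hξ₀mem, hfξ₀⟩ := hIVT h0mem
  have hξ₀pos : 0 < ξ₀ := by
    rcases eq_or_lt_of_le hξ₀mem.1 with heq | hlt
    · exfalso; rw [← heq, hf0] at hfξ₀; norm_num at hfξ₀
    · exact hlt
  have hneg : ∀ ξ : ℝ, 0 ≤ ξ → ξ < ξ₀ → f ξ < 0 := by
    intro ξ h0ξ hlt
    have := hfs h0ξ hξ₀pos.le hlt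
    linarith [hfξ₀]
  have hpos : ∀ ξ : ℝ, ξ₀ < ξ → 0 < f ξ := by
    intro ξ hgt
    have := hfs hξ₀pos.le (le_of_lt (lt_trans hξ₀pos hgt)) hgt
    linarith [hfξ₀]
  refine ⟨ξ₀, ⟨hξ₀pos, hneg, hpos⟩, ?_⟩
  rintro y ⟨hy0, hyneg, hypos⟩
  rcases lt_trichotomy y ξ₀ with hlt | heq | hgt
  · exfalso
    have h1 : 0 < f ((y + ξ₀)/2) := hypos _ (by linarith)
    have h2 : f ((y + ξ₀)/2) < 0 := hneg _ (by linarith) (by linarith)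
    linarith
  · exact heq
  · exfalso
    have h1 : 0 < f ((ξ₀ + y)/2) := hpos _ (by linarith)
    have h2 : f ((ξ₀ + y)/2) < 0 := hyneg _ (by linarith) (by linarith)
    linarith
end
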